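/- arXiv:2105.02528 — 2 statements merged into one kernel-verified Lean document; each statement's English description precedes it below -/
import Mathlib

section
/- Let H be a cocommutative weak Hopf algebra, (B,φ_B) a left weak H-module algebra with φ_B being φ_B-invertible. Then ω ∈ Reg_{φ_B}(H^{⊗n},B) satisfies ω̄ ∧ φ_B^{⊗n} = ω̄^{op} ∧ φ_B^{⊗n} if and only if ω factors through the center of B (i.e., for all b, the image of ω commutes with b). -/
open TensorProduct LinearMap

noncomputable section

namespace WK

/-- A weak bialgebra structure on a `k`-module `H`. -/
structure WeakBialgebraStr (k : Type) [CommRing k] (H : Type) [AddCommGroup H] [Module k H] :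
    Type where
  mu : H ⊗[k] H →ₗ[k] H
  one : H
  delta : H →ₗ[k] H ⊗[k] H
  eps : H →ₗ[k] k
  mul_assoc' : ∀ x y z : H, mu (mu (x ⊗ₜ[k] y) ⊗ₜ[k] z) = mu (x ⊗ₜ[k] mu (y ⊗ₜ[k] z))
  one_mul' : ∀ x : H, mu (one ⊗ₜ[k] x) = x
  mul_one' : ∀ x : H, mu (x ⊗ₜ[k] one) = x
  coassoc : ∀ x : H, rTensor H delta (delta x)
      = (TensorProduct.assoc k H H H).symm (lTensor H delta (delta x))
  counit_l : ∀ x : H, TensorProduct.lid k H (rTensor H eps (delta x)) = x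
  counit_r : ∀ x : H, TensorProduct.rid k H (lTensor H eps (delta x)) = x
  a1 : ∀ x y : H, delta (mu (x ⊗ₜ[k] y))
      = TensorProduct.map mu mu (tensorTensorTensorComm k H H H H (delta x ⊗ₜ[k] delta y))
  a2 : ∀ x y z : H, eps (mu (mu (x ⊗ₜ[k] y) ⊗ₜ[k] z))
      = LinearMap.mul' k k (TensorProduct.map (eps ∘ₗ mu)
          ((eps ∘ₗ mu) ∘ₗ (TensorProduct.comm k H H).toLinearMap)
          (tensorTensorTensorComm k H H H H ((x ⊗ₜ[k] z) ⊗ₜ[k] delta y)))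
  a2' : ∀ x y z : H, eps (mu (mu (x ⊗ₜ[k] y) ⊗ₜ[k] z))
      = LinearMap.mul' k k (TensorProduct.map (eps ∘ₗ mu)
          ((eps ∘ₗ mu) ∘ₗ (TensorProduct.comm k H H).toLinearMap)
          (tensorTensorTensorComm k H H H H
            ((x ⊗ₜ[k] z) ⊗ₜ[k] (TensorProduct.comm k H H (delta y)))))
  a3 : rTensor H delta (delta one)
      = rTensor H (lTensor H mu ∘ₗ (TensorProduct.assoc k H H H).toLinearMap)
          ((TensorProduct.assoc k (H ⊗[k] H) H H).symm (delta one ⊗ₜ[k] delta one))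
  a3' : rTensor H delta (delta one)
      = rTensor H (lTensor H (mu ∘ₗ (TensorProduct.comm k H H).toLinearMap)
            ∘ₗ (TensorProduct.assoc k H H H).toLinearMap)
          ((TensorProduct.assoc k (H ⊗[k] H) H H).symm (delta one ⊗ₜ[k] delta one))

variable {k : Type} [CommRing k] {H : Type} [AddCommGroup H] [Module k H]

namespace WeakBialgebraStr

variable (W : WeakBialgebraStr k H)

/-- `ε ∘ μ`. -/
def epsmu : H ⊗[k] H →ₗ[k] k := W.eps ∘ₗ W.mu

/-- The target map `Π^L`, `Π^L(h) = ε(1₍₁₎ h) 1₍₂₎`. -/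
def piL : H →ₗ[k] H :=
  (TensorProduct.lid k H).toLinearMap ∘ₗ rTensor H W.epsmu
    ∘ₗ (TensorProduct.assoc k H H H).symm.toLinearMap
    ∘ₗ lTensor H (TensorProduct.comm k H H).toLinearMap
    ∘ₗ (TensorProduct.assoc k H H H).toLinearMap
    ∘ₗ TensorProduct.mk k (H ⊗[k] H) H (W.delta W.one)

/-- The source map `Π^R`, `Π^R(h) = 1₍₁₎ ε(h 1₍₂₎)`. -/
def piR : H →ₗ[k] H :=
  (TensorProduct.rid k H).toLinearMap ∘ₗ lTensor H W.epsmu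
    ∘ₗ lTensor H (TensorProduct.comm k H H).toLinearMap
    ∘ₗ (TensorProduct.assoc k H H H).toLinearMap
    ∘ₗ TensorProduct.mk k (H ⊗[k] H) H (W.delta W.one)

/-- `Π̄^L(h) = 1₍₁₎ ε(1₍₂₎ h)`. -/
def pibarL : H →ₗ[k] H :=
  (TensorProduct.rid k H).toLinearMap ∘ₗ lTensor H W.epsmu
    ∘ₗ (TensorProduct.assoc k H H H).toLinearMap
    ∘ₗ TensorProduct.mk k (H ⊗[k] H) H (W.delta W.one)

/-- `Π̄^R(h) = ε(h 1₍₁₎) 1₍₂₎`. -/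
def pibarR : H →ₗ[k] H :=
  (TensorProduct.lid k H).toLinearMap ∘ₗ rTensor H W.epsmu
    ∘ₗ (TensorProduct.assoc k H H H).symm.toLinearMap
    ∘ₗ (TensorProduct.comm k (H ⊗[k] H) H).toLinearMap
    ∘ₗ TensorProduct.mk k (H ⊗[k] H) H (W.delta W.one)

end WeakBialgebraStr

/-- A weak Hopf algebra structure: a weak bialgebra with an antipode. -/
structure WeakHopfStr (k : Type) [CommRing k] (H : Type) [AddCommGroup H] [Module k H]
    extends WeakBialgebraStr k H where
  lam : H →ₗ[k] H
  antipode_r : toWeakBialgebraStr.mu ∘ₗ TensorProduct.map LinearMap.id lam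
      ∘ₗ toWeakBialgebraStr.delta = toWeakBialgebraStr.piL
  antipode_l : toWeakBialgebraStr.mu ∘ₗ TensorProduct.map lam LinearMap.id
      ∘ₗ toWeakBialgebraStr.delta = toWeakBialgebraStr.piR
  antipode_inner : toWeakBialgebraStr.mu ∘ₗ TensorProduct.map lam
      (toWeakBialgebraStr.mu ∘ₗ TensorProduct.map LinearMap.id lam
        ∘ₗ toWeakBialgebraStr.delta)
      ∘ₗ toWeakBialgebraStr.delta = lam

/-- Convolution product of two linear maps from a "coalgebra" `(X, D)` into an algebra `B`. -/
def convOn {B : Type} [Ring B] [Algebra k B] {X : Type} [AddCommGroup X] [Module k X]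
    (D : X →ₗ[k] X ⊗[k] X) (f g : X →ₗ[k] B) : X →ₗ[k] B :=
  LinearMap.mul' k B ∘ₗ TensorProduct.map f g ∘ₗ D

/-- Tensor product comultiplication. -/
def deltaT {X Y : Type} [AddCommGroup X] [Module k X] [AddCommGroup Y] [Module k Y]
    (dX : X →ₗ[k] X ⊗[k] X) (dY : Y →ₗ[k] Y ⊗[k] Y) :
    X ⊗[k] Y →ₗ[k] (X ⊗[k] Y) ⊗[k] (X ⊗[k] Y) :=
  (tensorTensorTensorComm k X X Y Y).toLinearMap ∘ₗ TensorProduct.map dX dY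

/-- Comultiplication of `H ⊗ H`. -/
def delta2 (W : WeakBialgebraStr k H) :
    H ⊗[k] H →ₗ[k] (H ⊗[k] H) ⊗[k] (H ⊗[k] H) := deltaT W.delta W.delta

/-- Comultiplication of `H ⊗ (H ⊗ H)`. -/
def delta3 (W : WeakBialgebraStr k H) :
    H ⊗[k] (H ⊗[k] H) →ₗ[k]
      (H ⊗[k] (H ⊗[k] H)) ⊗[k] (H ⊗[k] (H ⊗[k] H)) :=
  deltaT W.delta (delta2 W)

/-- Comultiplication of `H ⊗ (H ⊗ (H ⊗ H))`. -/
def delta4 (W : WeakBialgebraStr k H) :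
    H ⊗[k] (H ⊗[k] (H ⊗[k] H)) →ₗ[k]
      (H ⊗[k] (H ⊗[k] (H ⊗[k] H))) ⊗[k] (H ⊗[k] (H ⊗[k] (H ⊗[k] H))) :=
  deltaT W.delta (delta3 W)

/-- Cocommutativity of the coproduct. -/
def Cocomm (W : WeakBialgebraStr k H) : Prop :=
  ∀ x : H, TensorProduct.comm k H H (W.delta x) = W.delta x

variable {B : Type} [Ring B] [Algebra k B]

/-- A measuring of `H` on `B`. -/
def IsMeasuring (W : WeakBialgebraStr k H) (φ : H ⊗[k] B →ₗ[k] B) : Prop :=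
  ∀ (h : H) (b b' : B), φ (h ⊗ₜ[k] (b * b')) =
    LinearMap.mul' k B (TensorProduct.map φ φ
      (tensorTensorTensorComm k H H B B (W.delta h ⊗ₜ[k] (b ⊗ₜ[k] b'))))

/-- `u₁ = φ ∘ (H ⊗ η_B)`. -/
def u1 (φ : H ⊗[k] B →ₗ[k] B) : H →ₗ[k] B := φ ∘ₗ (TensorProduct.mk k H B).flip 1

/-- `u₂ = φ ∘ (μ_H ⊗ η_B)`. -/
def u2 (W : WeakBialgebraStr k H) (φ : H ⊗[k] B →ₗ[k] B) : H ⊗[k] H →ₗ[k] B :=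
  u1 φ ∘ₗ W.mu

/-- Left weak `H`-module algebra. -/
def IsWMA (W : WeakBialgebraStr k H) (φ : H ⊗[k] B →ₗ[k] B) : Prop :=
  IsMeasuring W φ ∧ (∀ b : B, φ (W.one ⊗ₜ[k] b) = b) ∧
    (∀ x y : H, u1 φ (W.mu (x ⊗ₜ[k] y)) = φ (x ⊗ₜ[k] u1 φ y))

/-- Left `H`-module algebra. -/
def IsMA (W : WeakBialgebraStr k H) (φ : H ⊗[k] B →ₗ[k] B) : Prop :=
  IsMeasuring W φ ∧ (∀ b : B, φ (W.one ⊗ₜ[k] b) = b) ∧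
    (∀ (x y : H) (b : B), φ (W.mu (x ⊗ₜ[k] y) ⊗ₜ[k] b) = φ (x ⊗ₜ[k] φ (y ⊗ₜ[k] b)))

/-- `P_{φ} = (φ ⊗ H) ∘ (H ⊗ c) ∘ (δ ⊗ B)`. -/
def Pmap (W : WeakBialgebraStr k H) (φ : H ⊗[k] B →ₗ[k] B) : H ⊗[k] B →ₗ[k] B ⊗[k] H :=
  rTensor H φ ∘ₗ (TensorProduct.assoc k H B H).symm.toLinearMap
    ∘ₗ lTensor H (TensorProduct.comm k H B).toLinearMap
    ∘ₗ (TensorProduct.assoc k H H B).toLinearMap ∘ₗ rTensor B W.delta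

/-- `F_σ = (σ ⊗ μ_H) ∘ δ_{H⊗H}`. -/
def Fmap (W : WeakBialgebraStr k H) (σ : H ⊗[k] H →ₗ[k] B) : H ⊗[k] H →ₗ[k] B ⊗[k] H :=
  TensorProduct.map σ W.mu ∘ₗ delta2 W

/-- `G_σ = (μ_H ⊗ σ) ∘ δ_{H⊗H}`. -/
def Gmap (W : WeakBialgebraStr k H) (σ : H ⊗[k] H →ₗ[k] B) : H ⊗[k] H →ₗ[k] H ⊗[k] B :=
  TensorProduct.map W.mu σ ∘ₗ delta2 W

/-- `∇_{B⊗H} = (μ_B ⊗ H) ∘ (B ⊗ ((u₁ ⊗ H) ∘ δ_H))`. -/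
def nabla (W : WeakBialgebraStr k H) (φ : H ⊗[k] B →ₗ[k] B) : B ⊗[k] H →ₗ[k] B ⊗[k] H :=
  rTensor H (LinearMap.mul' k B) ∘ₗ (TensorProduct.assoc k B B H).symm.toLinearMap
    ∘ₗ lTensor B (rTensor H (u1 φ) ∘ₗ W.delta)

/-- The twisted condition for `σ`. -/
def IsTwisted (W : WeakBialgebraStr k H) (φ : H ⊗[k] B →ₗ[k] B)
    (σ : H ⊗[k] H →ₗ[k] B) : Prop :=
  LinearMap.mul' k B ∘ₗ lTensor B σ ∘ₗ (TensorProduct.assoc k B H H).toLinearMap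
      ∘ₗ rTensor H (Pmap W φ) ∘ₗ (TensorProduct.assoc k H B H).symm.toLinearMap
      ∘ₗ lTensor H (Pmap W φ)
  = LinearMap.mul' k B ∘ₗ lTensor B φ ∘ₗ (TensorProduct.assoc k B H B).toLinearMap
      ∘ₗ rTensor B (Fmap W σ) ∘ₗ (TensorProduct.assoc k H H B).symm.toLinearMap

/-- The 2-cocycle condition for `σ`. -/
def IsCocycle (W : WeakBialgebraStr k H) (φ : H ⊗[k] B →ₗ[k] B)
    (σ : H ⊗[k] H →ₗ[k] B) : Prop :=
  LinearMap.mul' k B ∘ₗ lTensor B σ ∘ₗ (TensorProduct.assoc k B H H).toLinearMap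
      ∘ₗ rTensor H (Pmap W φ) ∘ₗ (TensorProduct.assoc k H B H).symm.toLinearMap
      ∘ₗ lTensor H (Fmap W σ)
  = LinearMap.mul' k B ∘ₗ lTensor B σ ∘ₗ (TensorProduct.assoc k B H H).toLinearMap
      ∘ₗ rTensor H (Fmap W σ) ∘ₗ (TensorProduct.assoc k H H H).symm.toLinearMap

/-- The Hom-product `φ ∧ ψ = φ ∘ (X ⊗ ψ) ∘ (D ⊗ B)`. -/
def wedgeOn {X : Type} [AddCommGroup X] [Module k X]
    (D : X →ₗ[k] X ⊗[k] X) (f g : X ⊗[k] B →ₗ[k] B) : X ⊗[k] B →ₗ[k] B :=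
  f ∘ₗ lTensor X g ∘ₗ (TensorProduct.assoc k X X B).toLinearMap ∘ₗ rTensor B D

/-- `ω̄ = μ_B ∘ (ω ⊗ B)`. -/
def wbar {X : Type} [AddCommGroup X] [Module k X] (ω : X →ₗ[k] B) : X ⊗[k] B →ₗ[k] B :=
  LinearMap.mul' k B ∘ₗ rTensor B ω

/-- `ω̄^{op} = μ_B ∘ c ∘ (ω ⊗ B)`. -/
def wbarOp {X : Type} [AddCommGroup X] [Module k X] (ω : X →ₗ[k] B) : X ⊗[k] B →ₗ[k] B :=
  LinearMap.mul' k B ∘ₗ (TensorProduct.comm k B B).toLinearMap ∘ₗ rTensor B ω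

/-- `(ω, ωi)` is a regular pair with unit `u`. -/
def RegPair {X : Type} [AddCommGroup X] [Module k X]
    (D : X →ₗ[k] X ⊗[k] X) (u ω ωi : X →ₗ[k] B) : Prop :=
  convOn D ω ωi = u ∧ convOn D ωi ω = u ∧
    convOn D (convOn D ω ωi) ω = ω ∧ convOn D (convOn D ωi ω) ωi = ωi

/-- Coface `∂_{2,0}`. -/
def cf20 (φ : H ⊗[k] B →ₗ[k] B) (σ : H ⊗[k] H →ₗ[k] B) :
    H ⊗[k] (H ⊗[k] H) →ₗ[k] B := φ ∘ₗ lTensor H σ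

/-- Coface `∂_{2,1}`. -/
def cf21 (W : WeakBialgebraStr k H) (σ : H ⊗[k] H →ₗ[k] B) :
    H ⊗[k] (H ⊗[k] H) →ₗ[k] B :=
  σ ∘ₗ rTensor H W.mu ∘ₗ (TensorProduct.assoc k H H H).symm.toLinearMap

/-- Coface `∂_{2,2}`. -/
def cf22 (W : WeakBialgebraStr k H) (σ : H ⊗[k] H →ₗ[k] B) :
    H ⊗[k] (H ⊗[k] H) →ₗ[k] B := σ ∘ₗ lTensor H W.mu

/-- Coface `∂_{2,3}`. -/
def cf23 (W : WeakBialgebraStr k H) (σ : H ⊗[k] H →ₗ[k] B) :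
    H ⊗[k] (H ⊗[k] H) →ₗ[k] B :=
  σ ∘ₗ lTensor H (W.mu ∘ₗ lTensor H W.piL)

/-- Coface `∂_{3,0}`. -/
def cf30 (φ : H ⊗[k] B →ₗ[k] B) (f : H ⊗[k] (H ⊗[k] H) →ₗ[k] B) :
    H ⊗[k] (H ⊗[k] (H ⊗[k] H)) →ₗ[k] B := φ ∘ₗ lTensor H f

/-- Coface `∂_{3,1}`. -/
def cf31 (W : WeakBialgebraStr k H) (f : H ⊗[k] (H ⊗[k] H) →ₗ[k] B) :
    H ⊗[k] (H ⊗[k] (H ⊗[k] H)) →ₗ[k] B :=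
  f ∘ₗ rTensor (H ⊗[k] H) W.mu ∘ₗ (TensorProduct.assoc k H H (H ⊗[k] H)).symm.toLinearMap

/-- Coface `∂_{3,2}`. -/
def cf32 (W : WeakBialgebraStr k H) (f : H ⊗[k] (H ⊗[k] H) →ₗ[k] B) :
    H ⊗[k] (H ⊗[k] (H ⊗[k] H)) →ₗ[k] B :=
  f ∘ₗ lTensor H (rTensor H W.mu ∘ₗ (TensorProduct.assoc k H H H).symm.toLinearMap)

/-- Coface `∂_{3,3}`. -/
def cf33 (W : WeakBialgebraStr k H) (f : H ⊗[k] (H ⊗[k] H) →ₗ[k] B) :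
    H ⊗[k] (H ⊗[k] (H ⊗[k] H)) →ₗ[k] B :=
  f ∘ₗ lTensor H (lTensor H W.mu)

/-- Coface `∂_{3,4}`. -/
def cf34 (W : WeakBialgebraStr k H) (f : H ⊗[k] (H ⊗[k] H) →ₗ[k] B) :
    H ⊗[k] (H ⊗[k] (H ⊗[k] H)) →ₗ[k] B :=
  f ∘ₗ lTensor H (lTensor H (W.mu ∘ₗ lTensor H W.piL))

/-- The pre-obstruction `ω_σ = ∂₂₀(σ) ∗ ∂₂₂(σ) ∗ ∂₂₁(σ⁻¹) ∗ ∂₂₃(σ⁻¹)`. -/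
def preObs (W : WeakBialgebraStr k H) (φ : H ⊗[k] B →ₗ[k] B)
    (σ σi : H ⊗[k] H →ₗ[k] B) : H ⊗[k] (H ⊗[k] H) →ₗ[k] B :=
  convOn (delta3 W)
    (convOn (delta3 W) (convOn (delta3 W) (cf20 φ σ) (cf22 W σ)) (cf21 W σi))
    (cf23 W σi)

/-- Bundled `k`-modules (to form iterated tensor powers). -/
structure ModB (k : Type) [CommRing k] : Type 1 where
  carrier : Type
  [acg : AddCommGroup carrier]
  [mod : Module k carrier]

attribute [instance] ModB.acg ModB.mod

/-- Tensor powers `H^{⊗(n+1)}`. -/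
def HpowM (k : Type) [CommRing k] (H : Type) [AddCommGroup H] [Module k H] : ℕ → ModB k
  | 0 => ⟨H⟩
  | n + 1 => ⟨H ⊗[k] (HpowM k H n).carrier⟩

/-- Comultiplication of `H^{⊗(n+1)}`. -/
def deltaPow (W : WeakBialgebraStr k H) : (n : ℕ) →
    ((HpowM k H n).carrier →ₗ[k] (HpowM k H n).carrier ⊗[k] (HpowM k H n).carrier)
  | 0 => W.delta
  | n + 1 => deltaT W.delta (deltaPow W n)

/-- Iterated multiplication `m : H^{⊗(n+1)} → H`. -/
def mPow (W : WeakBialgebraStr k H) : (n : ℕ) → ((HpowM k H n).carrier →ₗ[k] H)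
  | 0 => LinearMap.id
  | n + 1 => W.mu ∘ₗ lTensor H (mPow W n)

/-- Iterated action `φ^{⊗(n+1)} : H^{⊗(n+1)} ⊗ B → B`. -/
def phiPow (φ : H ⊗[k] B →ₗ[k] B) : (n : ℕ) →
    ((HpowM k H n).carrier ⊗[k] B →ₗ[k] B)
  | 0 => φ
  | n + 1 => φ ∘ₗ lTensor H (phiPow φ n)
      ∘ₗ (TensorProduct.assoc k H (HpowM k H n).carrier B).toLinearMap

/-- `u_{n+1} = u₁ ∘ m^{⊗(n+1)}`. -/
def uPow (W : WeakBialgebraStr k H) (φ : H ⊗[k] B →ₗ[k] B) (n : ℕ) :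
    (HpowM k H n).carrier →ₗ[k] B := u1 φ ∘ₗ mPow W n

end WK

namespace WKproof
open WK TensorProduct LinearMap

variable {k : Type} [CommRing k] {H : Type} [AddCommGroup H] [Module k H]
variable {B : Type} [Ring B] [Algebra k B]

section basics
variable (W : WeakBialgebraStr k H) (φ : H ⊗[k] B →ₗ[k] B)

/-- curried action `h ↦ φ(h ⊗ c)`. -/
def acm (c : B) : H →ₗ[k] B := φ ∘ₗ (TensorProduct.mk k H B).flip c

@[simp] lemma acm_apply (c : B) (h : H) : acm φ c h = φ (h ⊗ₜ[k] c) := rfl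

lemma u1_eq_acm : u1 φ = acm φ 1 := rfl

@[simp] lemma u1_apply (h : H) : u1 φ h = φ (h ⊗ₜ[k] (1:B)) := rfl

/-- `Σ f(x₁) g(x₂)` builder. -/
def cB {M N : Type} [AddCommGroup M] [Module k M] [AddCommGroup N] [Module k N]
    (f : M →ₗ[k] B) (g : N →ₗ[k] B) : M ⊗[k] N →ₗ[k] B :=
  LinearMap.mul' k B ∘ₗ TensorProduct.map f g

@[simp] lemma cB_tmul {M N : Type} [AddCommGroup M] [Module k M] [AddCommGroup N] [Module k N]
    (f : M →ₗ[k] B) (g : N →ₗ[k] B) (x : M) (y : N) :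
    cB f g (x ⊗ₜ[k] y) = f x * g y := by simp [cB]

/-- right multiplication in `H`. -/
def rmul (q : H) : H →ₗ[k] H := W.mu ∘ₗ (TensorProduct.mk k H H).flip q

@[simp] lemma rmul_apply (q x : H) : rmul W q x = W.mu (x ⊗ₜ[k] q) := rfl

variable {W φ}

section wma
variable (hφ : IsWMA W φ)
include hφ

lemma meas (h : H) (b c : B) :
    φ (h ⊗ₜ[k] (b * c)) = cB (acm φ b) (acm φ c) (W.delta h) := by
  have h1 := hφ.1 h b c
  rw [h1]
  have : (LinearMap.mul' k B ∘ₗ TensorProduct.map φ φ ∘ₗ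
      (tensorTensorTensorComm k H H B B).toLinearMap ∘ₗ
      (TensorProduct.mk k (H ⊗[k] H) (B ⊗[k] B)).flip (b ⊗ₜ[k] c))
      = cB (acm φ b) (acm φ c) := by
    apply TensorProduct.ext'
    intro x y
    simp [cB]
  exact DFunLike.congr_fun this (W.delta h)

lemma unit_act (b : B) : φ (W.one ⊗ₜ[k] b) = b := hφ.2.1 b

lemma wma_mul (x y : H) : u1 φ (W.mu (x ⊗ₜ[k] y)) = φ (x ⊗ₜ[k] u1 φ y) := hφ.2.2 x y

lemma acm_u1 (q : H) : acm φ (u1 φ q) = u1 φ ∘ₗ rmul W q := by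
  apply LinearMap.ext; intro p
  simp [wma_mul hφ]

/-- `u(b)*c` via `δ(1)`. -/
lemma Mconv (b c : B) : cB (acm φ b) (acm φ c) (W.delta W.one) = b * c := by
  rw [← meas hφ, unit_act hφ]

lemma AB1 (q : H) (c : B) :
    u1 φ q * c = cB (u1 φ ∘ₗ rmul W q) (acm φ c) (W.delta W.one) := by
  rw [← acm_u1 hφ, Mconv hφ]

lemma AB2 (q : H) (c : B) :
    c * u1 φ q = cB (acm φ c) (u1 φ ∘ₗ rmul W q) (W.delta W.one) := by
  rw [← acm_u1 hφ, Mconv hφ]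

lemma AB3 (z : H) : cB (u1 φ ∘ₗ rmul W z) (u1 φ) ∘ₗ W.delta = u1 φ ∘ₗ rmul W z := by
  apply LinearMap.ext; intro w
  have : cB (u1 φ ∘ₗ rmul W z) (u1 φ) (W.delta w)
      = cB (acm φ (u1 φ z)) (acm φ (1:B)) (W.delta w) := by
    rw [acm_u1 hφ, ← u1_eq_acm]
  simp only [comp_apply, this, ← meas hφ, mul_one]
  simp [wma_mul hφ]

end wma
end basics
end WKproof

namespace WKproof2
open WK TensorProduct LinearMap WKproof

variable {k : Type} [CommRing k] {H : Type} [AddCommGroup H] [Module k H]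
variable {B : Type} [Ring B] [Algebra k B]

section Etriple
variable (W : WeakBialgebraStr k H)

/-- `(p⊗q)⊗(r⊗s) ↦ p⊗((r*q)⊗s)`. -/
def Jt : (H ⊗[k] H) ⊗[k] (H ⊗[k] H) →ₗ[k] H ⊗[k] (H ⊗[k] H) :=
  lTensor H (rTensor H (W.mu ∘ₗ (TensorProduct.comm k H H).toLinearMap)
      ∘ₗ (TensorProduct.assoc k H H H).symm.toLinearMap)
    ∘ₗ (TensorProduct.assoc k H H (H ⊗[k] H)).toLinearMap

@[simp] lemma Jt_tmul (p q r s : H) :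
    Jt W ((p ⊗ₜ[k] q) ⊗ₜ[k] (r ⊗ₜ[k] s)) = p ⊗ₜ[k] (W.mu (r ⊗ₜ[k] q) ⊗ₜ[k] s) := by
  simp [Jt]

/-- `(p⊗q)⊗(r⊗s) ↦ p⊗(r⊗(s*q))`. -/
def Jc : (H ⊗[k] H) ⊗[k] (H ⊗[k] H) →ₗ[k] H ⊗[k] (H ⊗[k] H) :=
  lTensor H (lTensor H W.mu ∘ₗ (TensorProduct.assoc k H H H).toLinearMap
      ∘ₗ (TensorProduct.comm k H (H ⊗[k] H)).toLinearMap)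
    ∘ₗ (TensorProduct.assoc k H H (H ⊗[k] H)).toLinearMap

@[simp] lemma Jc_tmul (p q r s : H) :
    Jc W ((p ⊗ₜ[k] q) ⊗ₜ[k] (r ⊗ₜ[k] s)) = p ⊗ₜ[k] (r ⊗ₜ[k] W.mu (s ⊗ₜ[k] q)) := by
  simp [Jc]

lemma coassoc_one : lTensor H W.delta (W.delta W.one)
    = TensorProduct.assoc k H H H (rTensor H W.delta (W.delta W.one)) := by
  rw [W.coassoc]; simp

lemma E3T : lTensor H W.delta (W.delta W.one)
    = Jt W (W.delta W.one ⊗ₜ[k] W.delta W.one) := by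
  have hmap : (TensorProduct.assoc k H H H).toLinearMap
      ∘ₗ rTensor H (lTensor H (W.mu ∘ₗ (TensorProduct.comm k H H).toLinearMap)
            ∘ₗ (TensorProduct.assoc k H H H).toLinearMap)
      ∘ₗ (TensorProduct.assoc k (H ⊗[k] H) H H).symm.toLinearMap = Jt W := by
    apply TensorProduct.ext_fourfold'
    intro p q r s
    simp
  rw [coassoc_one, W.a3', ← hmap]
  simp

variable (hco : Cocomm W)
include hco

lemma E3sym : lTensor H (TensorProduct.comm k H H).toLinearMap
      (lTensor H W.delta (W.delta W.one)) = lTensor H W.delta (W.delta W.one) := by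
  rw [← lTensor_comp_apply]
  have : (TensorProduct.comm k H H).toLinearMap ∘ₗ W.delta = W.delta :=
    LinearMap.ext fun x => hco x
  rw [this]

lemma E3S : lTensor H W.delta (W.delta W.one)
    = Jc W (W.delta W.one ⊗ₜ[k] W.delta W.one) := by
  have step1 : lTensor H W.delta (W.delta W.one)
      = lTensor H (TensorProduct.comm k H H).toLinearMap
          (Jt W (W.delta W.one ⊗ₜ[k] W.delta W.one)) := by
    rw [← E3T, E3sym W hco]
  have hmap : lTensor H (TensorProduct.comm k H H).toLinearMap ∘ₗ Jt W
      = Jc W ∘ₗ lTensor (H ⊗[k] H) (TensorProduct.comm k H H).toLinearMap := by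
    apply TensorProduct.ext_fourfold'
    intro p q r s
    simp
  have := LinearMap.congr_fun hmap (W.delta W.one ⊗ₜ[k] W.delta W.one)
  simp only [comp_apply] at this
  rw [step1, this, lTensor_tmul]
  simp only [LinearEquiv.coe_coe]
  rw [hco W.one]

end Etriple

section ctrsec
variable (W : WeakBialgebraStr k H)
variable {M : Type} [AddCommGroup M] [Module k M]

/-- `p ⊗ m ↦ ε(p*h) • m`. -/
def ctr (h : H) : H ⊗[k] M →ₗ[k] M :=
  (TensorProduct.lid k M).toLinearMap
    ∘ₗ rTensor M (W.epsmu ∘ₗ (TensorProduct.mk k H H).flip h)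

@[simp] lemma ctr_tmul (h p : H) (m : M) :
    ctr W h (p ⊗ₜ[k] m) = W.epsmu (p ⊗ₜ[k] h) • m := by
  simp [ctr]

lemma GPi (g : H →ₗ[k] M) (h : H) :
    g (W.piL h) = ctr W h (lTensor H g (W.delta W.one)) := by
  have hmap : g ∘ₗ (TensorProduct.lid k H).toLinearMap ∘ₗ rTensor H W.epsmu
      ∘ₗ (TensorProduct.assoc k H H H).symm.toLinearMap
      ∘ₗ lTensor H (TensorProduct.comm k H H).toLinearMap
      ∘ₗ (TensorProduct.assoc k H H H).toLinearMap
      ∘ₗ (TensorProduct.mk k (H ⊗[k] H) H).flip h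
      = ctr W h ∘ₗ lTensor H g := by
    apply TensorProduct.ext'
    intro p q
    simp [WeakBialgebraStr.epsmu]
  have := LinearMap.congr_fun hmap (W.delta W.one)
  simp only [comp_apply, flip_apply, mk_apply] at this
  rw [← this]
  rfl

lemma piL_eq_ctr (h : H) : W.piL h = ctr W h (W.delta W.one) := by
  have := GPi W (LinearMap.id (R := k) (M := H)) h
  simpa using this

end ctrsec

section Qsec
variable (W : WeakBialgebraStr k H)

/-- `(r⊗s)⊗(r'⊗s') ↦ ε(r'*s) • (r⊗s')`. -/
def Cq : (H ⊗[k] H) ⊗[k] (H ⊗[k] H) →ₗ[k] H ⊗[k] H :=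
  lTensor H ((TensorProduct.lid k H).toLinearMap
      ∘ₗ rTensor H (W.epsmu ∘ₗ (TensorProduct.comm k H H).toLinearMap)
      ∘ₗ (TensorProduct.assoc k H H H).symm.toLinearMap)
    ∘ₗ (TensorProduct.assoc k H H (H ⊗[k] H)).toLinearMap

@[simp] lemma Cq_tmul (r s r' s' : H) :
    Cq W ((r ⊗ₜ[k] s) ⊗ₜ[k] (r' ⊗ₜ[k] s')) = W.epsmu (r' ⊗ₜ[k] s) • (r ⊗ₜ[k] s') := by
  simp [Cq, tmul_smul]

lemma CqPiL (r s : H) :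
    Cq W ((r ⊗ₜ[k] s) ⊗ₜ[k] W.delta W.one) = r ⊗ₜ[k] W.piL s := by
  have hmap : Cq W ∘ₗ (TensorProduct.mk k (H ⊗[k] H) (H ⊗[k] H)) (r ⊗ₜ[k] s)
      = (TensorProduct.mk k H H r) ∘ₗ ctr W s := by
    apply TensorProduct.ext'
    intro p q
    simp [tmul_smul]
  have := LinearMap.congr_fun hmap (W.delta W.one)
  simp only [comp_apply, mk_apply] at this
  rw [this, ← piL_eq_ctr]

lemma Qcore : Cq W (W.delta W.one ⊗ₜ[k] W.delta W.one) = W.delta W.one := by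
  have hid : (TensorProduct.rid k H).toLinearMap ∘ₗ lTensor H W.eps ∘ₗ W.delta
      = LinearMap.id := LinearMap.ext fun x => W.counit_r x
  have hL : rTensor H ((TensorProduct.rid k H).toLinearMap ∘ₗ lTensor H W.eps)
        (rTensor H W.delta (W.delta W.one)) = W.delta W.one := by
    rw [← rTensor_comp_apply, LinearMap.comp_assoc, hid]
    simp
  have hmap : rTensor H ((TensorProduct.rid k H).toLinearMap ∘ₗ lTensor H W.eps)
      ∘ₗ rTensor H (lTensor H (W.mu ∘ₗ (TensorProduct.comm k H H).toLinearMap)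
            ∘ₗ (TensorProduct.assoc k H H H).toLinearMap)
      ∘ₗ (TensorProduct.assoc k (H ⊗[k] H) H H).symm.toLinearMap = Cq W := by
    apply TensorProduct.ext_fourfold'
    intro p q r s
    simp [WeakBialgebraStr.epsmu, smul_tmul]
  have := LinearMap.congr_fun hmap (W.delta W.one ⊗ₜ[k] W.delta W.one)
  simp only [comp_apply, LinearEquiv.coe_coe] at this
  rw [← this, ← W.a3', hL]

lemma lem_Q : lTensor H (lTensor H W.piL) (lTensor H W.delta (W.delta W.one))
    = lTensor H W.delta (W.delta W.one) := by
  rw [E3T]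
  have hmap : lTensor H (lTensor H W.piL) ∘ₗ Jt W
      = Jt W ∘ₗ lTensor (H ⊗[k] H)
          (Cq W ∘ₗ (TensorProduct.mk k (H ⊗[k] H) (H ⊗[k] H)).flip (W.delta W.one)) := by
    apply TensorProduct.ext_fourfold'
    intro p q r s
    simp [CqPiL]
  have := LinearMap.congr_fun hmap (W.delta W.one ⊗ₜ[k] W.delta W.one)
  simp only [comp_apply] at this
  rw [this, lTensor_tmul]
  simp only [comp_apply, flip_apply, mk_apply]
  rw [Qcore, ← E3T]

variable (hco : Cocomm W)
include hco

lemma lem_P3 : lTensor H (rTensor H W.piL) (lTensor H W.delta (W.delta W.one))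
    = lTensor H W.delta (W.delta W.one) := by
  have hconj : rTensor H W.piL = (TensorProduct.comm k H H).toLinearMap
      ∘ₗ lTensor H W.piL ∘ₗ (TensorProduct.comm k H H).toLinearMap := by
    apply TensorProduct.ext'
    intro p q
    simp
  rw [hconj, LinearMap.lTensor_comp, LinearMap.lTensor_comp, comp_apply, comp_apply]
  rw [E3sym W hco, lem_Q W, E3sym W hco]

end Qsec
end WKproof2

namespace WKproof3
open WK TensorProduct LinearMap WKproof WKproof2

variable {k : Type} [CommRing k] {H : Type} [AddCommGroup H] [Module k H]
variable {B : Type} [Ring B] [Algebra k B]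

section Zsec
variable {W : WeakBialgebraStr k H} {φ : H ⊗[k] B →ₗ[k] B}

lemma cB_u_acm (hφ : IsWMA W φ) (c : B) :
    cB (u1 φ) (acm φ c) ∘ₗ W.delta = acm φ c := by
  apply LinearMap.ext; intro h
  simp only [comp_apply, u1_eq_acm, ← meas hφ, one_mul, acm_apply]

lemma cB_acm_u (hφ : IsWMA W φ) (c : B) :
    cB (acm φ c) (u1 φ) ∘ₗ W.delta = acm φ c := by
  apply LinearMap.ext; intro h
  simp only [comp_apply, u1_eq_acm, ← meas hφ, mul_one, acm_apply]

lemma Z1 (hφ : IsWMA W φ) (c : B) :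
    lTensor H (LinearMap.mulRight k c ∘ₗ u1 φ) (W.delta W.one)
      = lTensor H (acm φ c) (W.delta W.one) := by
  have hLR : lTensor H (LinearMap.mulRight k c ∘ₗ u1 φ)
      = lTensor H (cB (u1 φ) (acm φ c)) ∘ₗ Jt W
          ∘ₗ (TensorProduct.mk k (H ⊗[k] H) (H ⊗[k] H)).flip (W.delta W.one) := by
    apply TensorProduct.ext'
    intro p q
    have hsub : lTensor H (cB (u1 φ) (acm φ c)) ∘ₗ Jt W
        ∘ₗ (TensorProduct.mk k (H ⊗[k] H) (H ⊗[k] H) (p ⊗ₜ[k] q))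
        = TensorProduct.mk k H B p ∘ₗ cB (u1 φ ∘ₗ rmul W q) (acm φ c) := by
      apply TensorProduct.ext'
      intro r s
      simp
    have h2 := LinearMap.congr_fun hsub (W.delta W.one)
    simp only [comp_apply, mk_apply, flip_apply] at h2 ⊢
    rw [h2, lTensor_tmul, ← AB1 hφ q c]
    simp
  rw [hLR]
  simp only [comp_apply, flip_apply, mk_apply]
  rw [← E3T, ← lTensor_comp_apply, cB_u_acm hφ]

lemma Z2 (hco : Cocomm W) (hφ : IsWMA W φ) (c : B) :
    lTensor H (LinearMap.mulLeft k c ∘ₗ u1 φ) (W.delta W.one)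
      = lTensor H (acm φ c) (W.delta W.one) := by
  have hLR : lTensor H (LinearMap.mulLeft k c ∘ₗ u1 φ)
      = lTensor H (cB (acm φ c) (u1 φ)) ∘ₗ Jc W
          ∘ₗ (TensorProduct.mk k (H ⊗[k] H) (H ⊗[k] H)).flip (W.delta W.one) := by
    apply TensorProduct.ext'
    intro p q
    have hsub : lTensor H (cB (acm φ c) (u1 φ)) ∘ₗ Jc W
        ∘ₗ (TensorProduct.mk k (H ⊗[k] H) (H ⊗[k] H) (p ⊗ₜ[k] q))
        = TensorProduct.mk k H B p ∘ₗ cB (acm φ c) (u1 φ ∘ₗ rmul W q) := by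
      apply TensorProduct.ext'
      intro r s
      simp
    have h2 := LinearMap.congr_fun hsub (W.delta W.one)
    simp only [comp_apply, mk_apply, flip_apply] at h2 ⊢
    rw [h2, lTensor_tmul, ← AB2 hφ q c]
    simp
  rw [hLR]
  simp only [comp_apply, flip_apply, mk_apply]
  rw [← E3S W hco, ← lTensor_comp_apply, cB_acm_u hφ]

/-- expansion `φ(x⊗d) = Σ u(x₁) φ(x₂⊗d)` -/
lemma phi_exp (hφ : IsWMA W φ) :
    φ = LinearMap.mul' k B ∘ₗ TensorProduct.map (u1 φ) φ
        ∘ₗ (TensorProduct.assoc k H H B).toLinearMap ∘ₗ rTensor B W.delta := by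
  apply TensorProduct.ext'
  intro x d
  have hsub : LinearMap.mul' k B ∘ₗ TensorProduct.map (u1 φ) φ
      ∘ₗ (TensorProduct.assoc k H H B).toLinearMap
      ∘ₗ (TensorProduct.mk k (H ⊗[k] H) B).flip d
      = cB (acm φ 1) (acm φ d) := by
    apply TensorProduct.ext'
    intro p q
    simp
  have h2 := LinearMap.congr_fun hsub (W.delta x)
  simp only [comp_apply, mk_apply, flip_apply] at h2
  rw [comp_apply, comp_apply, comp_apply, rTensor_tmul, h2, ← meas hφ, one_mul]

end Zsec

section T1sec
variable (W : WeakBialgebraStr k H) (φ : H ⊗[k] B →ₗ[k] B)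

/-- `(b⊗b')⊗d ↦ ε(b'd) • u(b)` -/
def Zm : (H ⊗[k] H) ⊗[k] H →ₗ[k] B :=
  (TensorProduct.rid k B).toLinearMap ∘ₗ TensorProduct.map (u1 φ) W.epsmu
    ∘ₗ (TensorProduct.assoc k H H H).toLinearMap

@[simp] lemma Zm_tmul (b b' d : H) :
    Zm W φ ((b ⊗ₜ[k] b') ⊗ₜ[k] d) = W.epsmu (b' ⊗ₜ[k] d) • u1 φ b := by
  simp [Zm]

def Phi0 : (H ⊗[k] H) ⊗[k] (H ⊗[k] H) →ₗ[k] B :=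
  cB (u1 φ) (u1 φ ∘ₗ W.piL) ∘ₗ TensorProduct.map W.mu W.mu
    ∘ₗ (tensorTensorTensorComm k H H H H).toLinearMap

def Phi2 : (H ⊗[k] (H ⊗[k] H)) ⊗[k] (H ⊗[k] H) →ₗ[k] B :=
  LinearMap.mul' k B ∘ₗ TensorProduct.map (u1 φ ∘ₗ W.mu) (Zm W φ)
    ∘ₗ (tensorTensorTensorComm k H (H ⊗[k] H) H H).toLinearMap

@[simp] lemma Phi2_tmul (a b b' c d : H) :
    Phi2 W φ ((a ⊗ₜ[k] (b ⊗ₜ[k] b')) ⊗ₜ[k] (c ⊗ₜ[k] d))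
      = W.epsmu (b' ⊗ₜ[k] d) • (u1 φ (W.mu (a ⊗ₜ[k] c)) * u1 φ b) := by
  simp [Phi2, mul_smul_comm]

def Phi4 : (H ⊗[k] H) ⊗[k] (H ⊗[k] H) →ₗ[k] B :=
  u1 φ ∘ₗ (TensorProduct.rid k H).toLinearMap ∘ₗ lTensor H W.eps
    ∘ₗ TensorProduct.map W.mu W.mu ∘ₗ (tensorTensorTensorComm k H H H H).toLinearMap

@[simp] lemma Phi4_tmul (w b' c d : H) :
    Phi4 W φ ((w ⊗ₜ[k] b') ⊗ₜ[k] (c ⊗ₜ[k] d))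
      = W.eps (W.mu (b' ⊗ₜ[k] d)) • u1 φ (W.mu (w ⊗ₜ[k] c)) := by
  simp [Phi4]

variable {W φ}

lemma step_a1e (h : H) : W.delta h
    = TensorProduct.map W.mu W.mu
        (tensorTensorTensorComm k H H H H (W.delta W.one ⊗ₜ[k] W.delta h)) := by
  have := W.a1 W.one h
  rw [W.one_mul'] at this
  exact this

/-- the scalar `a2` identity in convenient form -/
lemma eps_a2 (p b d : H) :
    LinearMap.mul' k k (TensorProduct.map (W.epsmu ∘ₗ TensorProduct.mk k H H p)
      (W.epsmu ∘ₗ (TensorProduct.mk k H H).flip d) (W.delta b))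
    = W.epsmu (p ⊗ₜ[k] W.mu (b ⊗ₜ[k] d)) := by
  have h2 := W.a2 p b d
  have hglue : LinearMap.mul' k k ∘ₗ TensorProduct.map (W.eps ∘ₗ W.mu)
        ((W.eps ∘ₗ W.mu) ∘ₗ (TensorProduct.comm k H H).toLinearMap)
      ∘ₗ (tensorTensorTensorComm k H H H H).toLinearMap
      ∘ₗ (TensorProduct.mk k (H ⊗[k] H) (H ⊗[k] H) (p ⊗ₜ[k] d))
      = LinearMap.mul' k k ∘ₗ TensorProduct.map (W.epsmu ∘ₗ TensorProduct.mk k H H p)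
          (W.epsmu ∘ₗ (TensorProduct.mk k H H).flip d) := by
    apply TensorProduct.ext'
    intro x y
    simp [WeakBialgebraStr.epsmu, mul_comm]
  have h3 := LinearMap.congr_fun hglue (W.delta b)
  simp only [comp_apply, mk_apply, LinearEquiv.coe_coe] at h3
  rw [← h3, ← h2, WeakBialgebraStr.epsmu, comp_apply, W.mul_assoc']

/-- `piL(b*d) = Σ ε(b₂ d) • piL(b₁)` -/
lemma PiMulH (b d : H) :
    W.piL (W.mu (b ⊗ₜ[k] d))
      = TensorProduct.rid k H (TensorProduct.map W.piL
          (W.epsmu ∘ₗ (TensorProduct.mk k H H).flip d) (W.delta b)) := by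
  -- right side equals `piL w` for `w = Σ ε(b₂d)•b₁`
  have hmv : (TensorProduct.rid k H).toLinearMap ∘ₗ TensorProduct.map W.piL
        (W.epsmu ∘ₗ (TensorProduct.mk k H H).flip d)
      = W.piL ∘ₗ (TensorProduct.rid k H).toLinearMap ∘ₗ TensorProduct.map LinearMap.id
          (W.epsmu ∘ₗ (TensorProduct.mk k H H).flip d) := by
    apply TensorProduct.ext'
    intro x y
    simp
  have h4 := LinearMap.congr_fun hmv (W.delta b)
  simp only [comp_apply] at h4
  rw [← LinearEquiv.coe_coe (TensorProduct.rid k H), h4]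
  -- now both sides are piL applied to elements with equal ε-pairings
  set w := (TensorProduct.rid k H).toLinearMap
      (TensorProduct.map LinearMap.id (W.epsmu ∘ₗ (TensorProduct.mk k H H).flip d)
        (W.delta b)) with hw
  have hscal : W.epsmu ∘ₗ (TensorProduct.mk k H H).flip (W.mu (b ⊗ₜ[k] d))
      = W.epsmu ∘ₗ (TensorProduct.mk k H H).flip w := by
    apply LinearMap.ext
    intro p
    have hmap2 : W.epsmu ∘ₗ TensorProduct.mk k H H p
        ∘ₗ (TensorProduct.rid k H).toLinearMap ∘ₗ TensorProduct.map LinearMap.id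
          (W.epsmu ∘ₗ (TensorProduct.mk k H H).flip d)
        = LinearMap.mul' k k ∘ₗ TensorProduct.map (W.epsmu ∘ₗ TensorProduct.mk k H H p)
            (W.epsmu ∘ₗ (TensorProduct.mk k H H).flip d) := by
      apply TensorProduct.ext'
      intro x y
      simp [mul_comm]
    have h5 := LinearMap.congr_fun hmap2 (W.delta b)
    simp only [comp_apply, mk_apply, flip_apply] at h5 ⊢
    rw [hw, h5, eps_a2]
  rw [piL_eq_ctr, piL_eq_ctr]
  unfold WKproof2.ctr
  rw [hscal]

lemma stepA (hφ : IsWMA W φ) : Phi0 W φ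
    = Phi2 W φ ∘ₗ rTensor (H ⊗[k] H)
        (lTensor H (rTensor H W.piL) ∘ₗ lTensor H W.delta) := by
  apply TensorProduct.ext_fourfold'
  intro a b c d
  have hasub : Phi2 W φ ∘ₗ ((TensorProduct.mk k (H ⊗[k] (H ⊗[k] H)) (H ⊗[k] H)).flip
        (c ⊗ₜ[k] d)) ∘ₗ TensorProduct.mk k H (H ⊗[k] H) a
      = LinearMap.mulLeft k (u1 φ (W.mu (a ⊗ₜ[k] c)))
          ∘ₗ Zm W φ ∘ₗ (TensorProduct.mk k (H ⊗[k] H) H).flip d := by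
    apply TensorProduct.ext'
    intro x y
    simp [mul_smul_comm]
  have h6 := LinearMap.congr_fun hasub (rTensor H W.piL (W.delta b))
  simp only [comp_apply, mk_apply, flip_apply] at h6
  have hz : Zm W φ ∘ₗ (TensorProduct.mk k (H ⊗[k] H) H).flip d ∘ₗ rTensor H W.piL
      = u1 φ ∘ₗ (TensorProduct.rid k H).toLinearMap ∘ₗ TensorProduct.map W.piL
          (W.epsmu ∘ₗ (TensorProduct.mk k H H).flip d) := by
    apply TensorProduct.ext'
    intro x y
    simp
  have h7 := LinearMap.congr_fun hz (W.delta b)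
  simp only [comp_apply, mk_apply, flip_apply] at h7
  -- assemble
  simp only [comp_apply, rTensor_tmul, lTensor_tmul]
  rw [h6, h7]
  simp only [LinearEquiv.coe_coe]
  rw [← PiMulH]
  simp [Phi0, mul_smul_comm]

lemma stepC (hφ : IsWMA W φ) :
    Phi2 W φ ∘ₗ rTensor (H ⊗[k] H)
        ((TensorProduct.assoc k H H H).toLinearMap ∘ₗ rTensor H W.delta)
      = Phi4 W φ := by
  apply TensorProduct.ext_fourfold'
  intro w b' c d
  have hsub : Phi2 W φ ∘ₗ ((TensorProduct.mk k (H ⊗[k] (H ⊗[k] H)) (H ⊗[k] H)).flip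
        (c ⊗ₜ[k] d)) ∘ₗ (TensorProduct.assoc k H H H).toLinearMap
        ∘ₗ (TensorProduct.mk k (H ⊗[k] H) H).flip b'
      = LinearMap.lsmul k B (W.epsmu (b' ⊗ₜ[k] d)) ∘ₗ cB (u1 φ ∘ₗ rmul W c) (u1 φ) := by
    apply TensorProduct.ext'
    intro x y
    simp [mul_smul_comm, smul_mul_assoc]
  have h8 := LinearMap.congr_fun hsub (W.delta w)
  simp only [comp_apply, mk_apply, flip_apply] at h8
  have h9 := LinearMap.congr_fun (AB3 hφ c) w
  simp only [comp_apply] at h9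
  simp only [comp_apply, rTensor_tmul]
  rw [h8, h9]
  simp [WeakBialgebraStr.epsmu]

lemma T1b (hco : Cocomm W) (hφ : IsWMA W φ) :
    cB (u1 φ) (u1 φ ∘ₗ W.piL) ∘ₗ W.delta = u1 φ := by
  apply LinearMap.ext
  intro h
  have e0 : cB (u1 φ) (u1 φ ∘ₗ W.piL) (W.delta h)
      = Phi0 W φ (W.delta W.one ⊗ₜ[k] W.delta h) := by
    have e0' : Phi0 W φ (W.delta W.one ⊗ₜ[k] W.delta h)
        = cB (u1 φ) (u1 φ ∘ₗ W.piL) (TensorProduct.map W.mu W.mu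
            (tensorTensorTensorComm k H H H H (W.delta W.one ⊗ₜ[k] W.delta h))) := by
      simp [Phi0]
    rw [e0', ← step_a1e h]
  rw [comp_apply, e0]
  have e1 := LinearMap.congr_fun (stepA (W := W) (φ := φ) hφ)
      (W.delta W.one ⊗ₜ[k] W.delta h)
  rw [e1]
  simp only [comp_apply, rTensor_tmul]
  rw [lem_P3 W hco, coassoc_one W]
  have e3 := LinearMap.congr_fun (stepC (W := W) (φ := φ) hφ)
      (W.delta W.one ⊗ₜ[k] W.delta h)
  simp only [comp_apply, rTensor_tmul, LinearEquiv.coe_coe] at e3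
  rw [e3]
  -- Phi4 (e ⊗ δh) = u h
  have e4 : Phi4 W φ (W.delta W.one ⊗ₜ[k] W.delta h)
      = u1 φ ((TensorProduct.rid k H) (lTensor H W.eps (W.delta h))) := by
    simp only [Phi4, comp_apply, LinearEquiv.coe_coe]
    rw [← step_a1e h]
  rw [e4, W.counit_r]

lemma T1a (hφ : IsWMA W φ) (lam : H →ₗ[k] H)
    (hanti : W.mu ∘ₗ TensorProduct.map LinearMap.id lam ∘ₗ W.delta = W.piL) :
    u1 φ ∘ₗ W.piL = cB (u1 φ) (u1 φ ∘ₗ W.piL) ∘ₗ W.delta := by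
  have hmap : u1 φ ∘ₗ W.mu ∘ₗ TensorProduct.map LinearMap.id lam
      = φ ∘ₗ lTensor H (u1 φ ∘ₗ lam) := by
    apply TensorProduct.ext'
    intro x y
    simp [wma_mul hφ]
  have h1 : u1 φ ∘ₗ W.piL = φ ∘ₗ lTensor H (u1 φ ∘ₗ lam) ∘ₗ W.delta := by
    rw [← hanti]
    apply LinearMap.ext
    intro h
    simp only [comp_apply]
    have := LinearMap.congr_fun hmap (W.delta h)
    simp only [comp_apply] at this
    exact this
  have hswap : rTensor B W.delta ∘ₗ lTensor H (u1 φ ∘ₗ lam)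
      = lTensor (H ⊗[k] H) (u1 φ ∘ₗ lam) ∘ₗ rTensor H W.delta := by
    apply TensorProduct.ext'
    intro x y
    simp
  have h4 : LinearMap.mul' k B ∘ₗ TensorProduct.map (u1 φ) φ
      ∘ₗ (TensorProduct.assoc k H H B).toLinearMap ∘ₗ lTensor (H ⊗[k] H) (u1 φ ∘ₗ lam)
      = cB (u1 φ) (φ ∘ₗ lTensor H (u1 φ ∘ₗ lam)) ∘ₗ (TensorProduct.assoc k H H H).toLinearMap := by
    apply TensorProduct.ext_threefold
    intro x y z
    simp
  have hcb : cB (u1 φ) (φ ∘ₗ lTensor H (u1 φ ∘ₗ lam)) ∘ₗ lTensor H W.delta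
      = cB (u1 φ) (φ ∘ₗ lTensor H (u1 φ ∘ₗ lam) ∘ₗ W.delta) := by
    apply TensorProduct.ext'
    intro x y
    simp
  apply LinearMap.ext
  intro h
  rw [h1]
  simp only [comp_apply]
  rw [LinearMap.congr_fun (phi_exp hφ) (lTensor H (u1 φ ∘ₗ lam) (W.delta h))]
  simp only [comp_apply]
  have hswapped := LinearMap.congr_fun hswap (W.delta h)
  simp only [comp_apply] at hswapped
  rw [hswapped, W.coassoc h]
  have h5 := LinearMap.congr_fun h4
      ((TensorProduct.assoc k H H H).symm (lTensor H W.delta (W.delta h)))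
  simp only [comp_apply, LinearEquiv.coe_coe] at h5
  simp only [LinearEquiv.coe_coe]
  rw [h5]
  simp only [LinearEquiv.apply_symm_apply]
  have h6 := LinearMap.congr_fun hcb (W.delta h)
  simp only [comp_apply] at h6
  rw [h6, ← h1]

lemma T1 (hco : Cocomm W) (hφ : IsWMA W φ) (lam : H →ₗ[k] H)
    (hanti : W.mu ∘ₗ TensorProduct.map LinearMap.id lam ∘ₗ W.delta = W.piL) :
    u1 φ ∘ₗ W.piL = u1 φ := (T1a hφ lam hanti).trans (T1b hco hφ)

/-- THE key lemma: `u1` is central. -/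
lemma u1_central (hco : Cocomm W) (hφ : IsWMA W φ) (lam : H →ₗ[k] H)
    (hanti : W.mu ∘ₗ TensorProduct.map LinearMap.id lam ∘ₗ W.delta = W.piL)
    (h : H) (c : B) : u1 φ h * c = c * u1 φ h := by
  have t1 := LinearMap.congr_fun (T1 hco hφ lam hanti) h
  simp only [comp_apply] at t1
  have g1 := GPi W (LinearMap.mulRight k c ∘ₗ u1 φ) h
  have g2 := GPi W (LinearMap.mulLeft k c ∘ₗ u1 φ) h
  simp only [comp_apply, mulRight_apply, mulLeft_apply] at g1 g2
  calc u1 φ h * c = u1 φ (W.piL h) * c := by rw [t1]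
    _ = ctr W h (lTensor H (LinearMap.mulRight k c ∘ₗ u1 φ) (W.delta W.one)) := g1
    _ = ctr W h (lTensor H (acm φ c) (W.delta W.one)) := by rw [Z1 hφ]
    _ = ctr W h (lTensor H (LinearMap.mulLeft k c ∘ₗ u1 φ) (W.delta W.one)) := by
        rw [Z2 hco hφ]
    _ = c * u1 φ (W.piL h) := g2.symm
    _ = c * u1 φ h := by rw [t1]

end T1sec
end WKproof3

namespace WKproof4
open WK TensorProduct LinearMap WKproof WKproof2 WKproof3

variable {k : Type} [CommRing k] {H : Type} [AddCommGroup H] [Module k H]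
variable {B : Type} [Ring B] [Algebra k B]

/-- coassociativity predicate -/
def CoassocP {X : Type} [AddCommGroup X] [Module k X] (D : X →ₗ[k] X ⊗[k] X) : Prop :=
  ∀ t, rTensor X D (D t) = (TensorProduct.assoc k X X X).symm (lTensor X D (D t))

section wedge
variable {X : Type} [AddCommGroup X] [Module k X]

/-- `wsub D g (x⊗b) = Σ x₁ ⊗ g(x₂⊗b)` -/
def wsub (D : X →ₗ[k] X ⊗[k] X) (g : X ⊗[k] B →ₗ[k] B) : X ⊗[k] B →ₗ[k] X ⊗[k] B :=
  lTensor X g ∘ₗ (TensorProduct.assoc k X X B).toLinearMap ∘ₗ rTensor B D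

lemma wedgeOn_eq (D : X →ₗ[k] X ⊗[k] X) (f g : X ⊗[k] B →ₗ[k] B) :
    wedgeOn D f g = f ∘ₗ wsub D g := rfl

lemma wsub_wsub {D : X →ₗ[k] X ⊗[k] X} (hD : CoassocP D) (g h' : X ⊗[k] B →ₗ[k] B) :
    wsub D g ∘ₗ wsub D h' = wsub D (g ∘ₗ wsub D h') := by
  have id1 : rTensor B D ∘ₗ lTensor X h'
      = lTensor (X ⊗[k] X) h' ∘ₗ rTensor (X ⊗[k] B) D := by
    apply TensorProduct.ext'; intro x y; simp
  have id2 : rTensor (X ⊗[k] B) D ∘ₗ (TensorProduct.assoc k X X B).toLinearMap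
      = (TensorProduct.assoc k (X ⊗[k] X) X B).toLinearMap
          ∘ₗ rTensor B (rTensor X D) := by
    apply TensorProduct.ext_threefold; intro x y z; simp
  have id5 : lTensor X (rTensor B D) ∘ₗ (TensorProduct.assoc k X X B).toLinearMap
      = (TensorProduct.assoc k X (X ⊗[k] X) B).toLinearMap
          ∘ₗ rTensor B (lTensor X D) := by
    apply TensorProduct.ext_threefold; intro x y z; simp
  have idPW : (TensorProduct.assoc k X X B).toLinearMap ∘ₗ lTensor (X ⊗[k] X) h'
        ∘ₗ (TensorProduct.assoc k (X ⊗[k] X) X B).toLinearMap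
        ∘ₗ rTensor B (TensorProduct.assoc k X X X).symm.toLinearMap
      = lTensor X (lTensor X h') ∘ₗ lTensor X (TensorProduct.assoc k X X B).toLinearMap
          ∘ₗ (TensorProduct.assoc k X (X ⊗[k] X) B).toLinearMap := by
    apply TensorProduct.ext_threefold
    intro w y z
    induction y using TensorProduct.induction_on with
    | zero => simp
    | tmul a b => simp
    | add a b ha hb => simp only [tmul_add, add_tmul, map_add, ha, hb]
  apply TensorProduct.ext'
  intro x b
  simp only [wsub, comp_apply, rTensor_tmul, LinearEquiv.coe_coe]
  have s1 := LinearMap.congr_fun id1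
      ((TensorProduct.assoc k X X B) (D x ⊗ₜ[k] b))
  simp only [comp_apply, LinearEquiv.coe_coe] at s1
  rw [s1]
  have s2 := LinearMap.congr_fun id2 (D x ⊗ₜ[k] b)
  simp only [comp_apply, rTensor_tmul, LinearEquiv.coe_coe] at s2
  rw [s2, hD x]
  have s3 := LinearMap.congr_fun idPW (lTensor X D (D x) ⊗ₜ[k] b)
  simp only [comp_apply, rTensor_tmul, LinearEquiv.coe_coe] at s3
  rw [s3]
  have s4 := LinearMap.congr_fun id5 (D x ⊗ₜ[k] b)
  simp only [comp_apply, rTensor_tmul, LinearEquiv.coe_coe] at s4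
  simp only [wsub, lTensor_comp, comp_apply, LinearEquiv.coe_coe]
  rw [s4]

lemma convOn_eq (D : X →ₗ[k] X ⊗[k] X) (f g : X →ₗ[k] B) :
    convOn D f g = cB f g ∘ₗ D := rfl

lemma convOn_assoc {D : X →ₗ[k] X ⊗[k] X} (hD : CoassocP D) (f g h' : X →ₗ[k] B) :
    convOn D (convOn D f g) h' = convOn D f (convOn D g h') := by
  have m1 : TensorProduct.map (cB f g ∘ₗ D) h'
      = TensorProduct.map (cB f g) h' ∘ₗ rTensor X D := by
    apply TensorProduct.ext'; intro x y; simp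
  have m2 : TensorProduct.map f (cB g h' ∘ₗ D)
      = TensorProduct.map f (cB g h') ∘ₗ lTensor X D := by
    apply TensorProduct.ext'; intro x y; simp
  have id7 : LinearMap.mul' k B ∘ₗ TensorProduct.map (cB f g) h'
        ∘ₗ (TensorProduct.assoc k X X X).symm.toLinearMap
      = LinearMap.mul' k B ∘ₗ TensorProduct.map f (cB g h') := by
    apply TensorProduct.ext'
    intro a t
    induction t using TensorProduct.induction_on with
    | zero => simp
    | tmul y z => simp [mul_assoc]
    | add s t hs ht => simp only [tmul_add, map_add, hs, ht]
  apply LinearMap.ext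
  intro x
  show LinearMap.mul' k B (TensorProduct.map (convOn D f g) h' (D x))
      = LinearMap.mul' k B (TensorProduct.map f (convOn D g h') (D x))
  rw [convOn_eq, convOn_eq, m1, m2]
  simp only [comp_apply]
  rw [hD x]
  have := LinearMap.congr_fun id7 (lTensor X D (D x))
  simp only [comp_apply, LinearEquiv.coe_coe] at this
  rw [this]

end wedge

section dpow
variable {X Y : Type} [AddCommGroup X] [Module k X] [AddCommGroup Y] [Module k Y]

lemma deltaT_tmul (dX : X →ₗ[k] X ⊗[k] X) (dY : Y →ₗ[k] Y ⊗[k] Y) (x : X) (y : Y) :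
    deltaT dX dY (x ⊗ₜ[k] y) = tensorTensorTensorComm k X X Y Y (dX x ⊗ₜ[k] dY y) := by
  simp [deltaT]

lemma deltaT_coassoc {dX : X →ₗ[k] X ⊗[k] X} {dY : Y →ₗ[k] Y ⊗[k] Y}
    (hX : CoassocP dX) (hY : CoassocP dY) : CoassocP (deltaT dX dY) := by
  have hmapL : rTensor (X ⊗[k] Y) (deltaT dX dY) ∘ₗ deltaT dX dY
      = rTensor (X ⊗[k] Y) (tensorTensorTensorComm k X X Y Y).toLinearMap
          ∘ₗ (tensorTensorTensorComm k (X ⊗[k] X) X (Y ⊗[k] Y) Y).toLinearMap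
          ∘ₗ TensorProduct.map (rTensor X dX ∘ₗ dX) (rTensor Y dY ∘ₗ dY) := by
    apply TensorProduct.ext'
    intro x y
    have sub : rTensor (X ⊗[k] Y) (deltaT dX dY)
          ∘ₗ (tensorTensorTensorComm k X X Y Y).toLinearMap
        = rTensor (X ⊗[k] Y) (tensorTensorTensorComm k X X Y Y).toLinearMap
            ∘ₗ (tensorTensorTensorComm k (X ⊗[k] X) X (Y ⊗[k] Y) Y).toLinearMap
            ∘ₗ TensorProduct.map (rTensor X dX) (rTensor Y dY) := by
      apply TensorProduct.ext_fourfold'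
      intro a b c d
      simp [deltaT]
    have := LinearMap.congr_fun sub (dX x ⊗ₜ[k] dY y)
    simp only [comp_apply, map_tmul, LinearEquiv.coe_coe] at this ⊢
    rw [deltaT_tmul, this]
  have hmapR : lTensor (X ⊗[k] Y) (deltaT dX dY) ∘ₗ deltaT dX dY
      = lTensor (X ⊗[k] Y) (tensorTensorTensorComm k X X Y Y).toLinearMap
          ∘ₗ (tensorTensorTensorComm k X (X ⊗[k] X) Y (Y ⊗[k] Y)).toLinearMap
          ∘ₗ TensorProduct.map (lTensor X dX ∘ₗ dX) (lTensor Y dY ∘ₗ dY) := by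
    apply TensorProduct.ext'
    intro x y
    have sub : lTensor (X ⊗[k] Y) (deltaT dX dY)
          ∘ₗ (tensorTensorTensorComm k X X Y Y).toLinearMap
        = lTensor (X ⊗[k] Y) (tensorTensorTensorComm k X X Y Y).toLinearMap
            ∘ₗ (tensorTensorTensorComm k X (X ⊗[k] X) Y (Y ⊗[k] Y)).toLinearMap
            ∘ₗ TensorProduct.map (lTensor X dX) (lTensor Y dY) := by
      apply TensorProduct.ext_fourfold'
      intro a b c d
      simp [deltaT]
    have := LinearMap.congr_fun sub (dX x ⊗ₜ[k] dY y)
    simp only [comp_apply, map_tmul, LinearEquiv.coe_coe] at this ⊢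
    rw [deltaT_tmul, this]
  have hmid : rTensor (X ⊗[k] Y) (tensorTensorTensorComm k X X Y Y).toLinearMap
        ∘ₗ (tensorTensorTensorComm k (X ⊗[k] X) X (Y ⊗[k] Y) Y).toLinearMap
        ∘ₗ TensorProduct.map (TensorProduct.assoc k X X X).symm.toLinearMap
            (TensorProduct.assoc k Y Y Y).symm.toLinearMap
      = (TensorProduct.assoc k (X ⊗[k] Y) (X ⊗[k] Y) (X ⊗[k] Y)).symm.toLinearMap
          ∘ₗ lTensor (X ⊗[k] Y) (tensorTensorTensorComm k X X Y Y).toLinearMap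
          ∘ₗ (tensorTensorTensorComm k X (X ⊗[k] X) Y (Y ⊗[k] Y)).toLinearMap := by
    apply TensorProduct.ext_fourfold'
    intro a s c t
    induction s using TensorProduct.induction_on with
    | zero => simp
    | tmul a1 a2 =>
      induction t using TensorProduct.induction_on with
      | zero => simp
      | tmul b1 b2 => simp
      | add u v hu hv => simp only [tmul_add, add_tmul, map_add, hu, hv]
    | add u v hu hv => simp only [tmul_add, add_tmul, map_add, hu, hv]
  intro t
  have l1 := LinearMap.congr_fun hmapL t
  have l2 := LinearMap.congr_fun hmapR t
  simp only [comp_apply] at l1 l2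
  rw [l1, l2]
  have hcomp : TensorProduct.map (rTensor X dX ∘ₗ dX) (rTensor Y dY ∘ₗ dY)
      = TensorProduct.map ((TensorProduct.assoc k X X X).symm.toLinearMap
            ∘ₗ lTensor X dX ∘ₗ dX)
          ((TensorProduct.assoc k Y Y Y).symm.toLinearMap ∘ₗ lTensor Y dY ∘ₗ dY) := by
    apply TensorProduct.ext'
    intro x y
    simp only [map_tmul, comp_apply, LinearEquiv.coe_coe]
    rw [hX x, hY y]
  rw [hcomp]
  have hsplit : TensorProduct.map ((TensorProduct.assoc k X X X).symm.toLinearMap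
        ∘ₗ lTensor X dX ∘ₗ dX)
      ((TensorProduct.assoc k Y Y Y).symm.toLinearMap ∘ₗ lTensor Y dY ∘ₗ dY)
      = TensorProduct.map (TensorProduct.assoc k X X X).symm.toLinearMap
          (TensorProduct.assoc k Y Y Y).symm.toLinearMap
        ∘ₗ TensorProduct.map (lTensor X dX ∘ₗ dX) (lTensor Y dY ∘ₗ dY) := by
    apply TensorProduct.ext'
    intro x y
    simp
  rw [hsplit]
  have := LinearMap.congr_fun hmid
      (TensorProduct.map (lTensor X dX ∘ₗ dX) (lTensor Y dY ∘ₗ dY) t)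
  simp only [comp_apply, LinearEquiv.coe_coe] at this ⊢
  exact this

end dpow

section dpowH
variable {W : WeakBialgebraStr k H}

lemma DPcoassoc (W : WeakBialgebraStr k H) :
    ∀ n : ℕ, CoassocP (deltaPow W n)
  | 0 => fun t => W.coassoc t
  | n + 1 => deltaT_coassoc (fun t => W.coassoc t) (DPcoassoc W n)

end dpowH

section F1
variable {W : WeakBialgebraStr k H} {φ : H ⊗[k] B →ₗ[k] B}

lemma cB_assoc_mk {g₀ : H →ₗ[k] B} (m : B) (q : H) :
    cB (acm φ m) (φ ∘ₗ lTensor H g₀) ∘ₗ (TensorProduct.assoc k H H H).toLinearMap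
        ∘ₗ (TensorProduct.mk k (H ⊗[k] H) H).flip q
      = cB (acm φ m) (acm φ (g₀ q)) := by
  apply TensorProduct.ext'
  intro a b
  simp

lemma meas_mapid (hφ : IsWMA W φ) (m : B) (g₀ : H →ₗ[k] B) :
    φ ∘ₗ lTensor H (LinearMap.mulLeft k m ∘ₗ g₀)
      = cB (acm φ m) (φ ∘ₗ lTensor H g₀) ∘ₗ (TensorProduct.assoc k H H H).toLinearMap
          ∘ₗ rTensor H W.delta := by
  apply TensorProduct.ext'
  intro p q
  have h1 := LinearMap.congr_fun (cB_assoc_mk (φ := φ) (g₀ := g₀) m q) (W.delta p)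
  simp only [comp_apply, flip_apply, mk_apply] at h1
  simp only [comp_apply, lTensor_tmul, rTensor_tmul, mulLeft_apply]
  rw [h1, ← meas hφ]

lemma cB_lT_delta (f : H →ₗ[k] B) (G : H ⊗[k] H →ₗ[k] B) :
    cB f G ∘ₗ lTensor H W.delta = cB f (G ∘ₗ W.delta) := by
  apply TensorProduct.ext'
  intro p q
  simp

lemma cB_mulRight (f : H →ₗ[k] B) (g : H →ₗ[k] B) (b : B) :
    cB f (LinearMap.mulRight k b ∘ₗ g) = LinearMap.mulRight k b ∘ₗ cB f g := by
  apply TensorProduct.ext'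
  intro p q
  simp [mul_assoc]

lemma F1step (hφ : IsWMA W φ) (φd : H ⊗[k] B →ₗ[k] B)
    (hd : wedgeOn W.delta φ φd = wbar (u1 φ))
    {Y : Type} [AddCommGroup Y] [Module k Y] (dY : Y →ₗ[k] Y ⊗[k] Y)
    (φY : Y ⊗[k] B →ₗ[k] B) (mY : Y →ₗ[k] H) (ΦY : Y ⊗[k] B →ₗ[k] B)
    (hY : wedgeOn dY φY ΦY = wbar (u1 φ ∘ₗ mY)) :
    wedgeOn (deltaT W.delta dY)
        (φ ∘ₗ lTensor H φY ∘ₗ (TensorProduct.assoc k H Y B).toLinearMap)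
        (ΦY ∘ₗ lTensor Y φd ∘ₗ (TensorProduct.leftComm k H Y B).toLinearMap
          ∘ₗ (TensorProduct.assoc k H Y B).toLinearMap)
      = wbar (u1 φ ∘ₗ (W.mu ∘ₗ lTensor H mY)) := by
  apply TensorProduct.ext_threefold
  intro h x b
  set g0 : H →ₗ[k] B := φd ∘ₗ (TensorProduct.mk k H B).flip b with hg0
  set Φ' : (H ⊗[k] Y) ⊗[k] B →ₗ[k] B :=
    ΦY ∘ₗ lTensor Y φd ∘ₗ (TensorProduct.leftComm k H Y B).toLinearMap
      ∘ₗ (TensorProduct.assoc k H Y B).toLinearMap with hPhi'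
  set φ' : (H ⊗[k] Y) ⊗[k] B →ₗ[k] B :=
    φ ∘ₗ lTensor H φY ∘ₗ (TensorProduct.assoc k H Y B).toLinearMap with hphi'
  set Om : (H ⊗[k] H) ⊗[k] (Y ⊗[k] Y) →ₗ[k] B :=
    φ' ∘ₗ lTensor (H ⊗[k] Y) Φ'
      ∘ₗ (TensorProduct.assoc k (H ⊗[k] Y) (H ⊗[k] Y) B).toLinearMap
      ∘ₗ (TensorProduct.mk k ((H ⊗[k] Y) ⊗[k] (H ⊗[k] Y)) B).flip b
      ∘ₗ (tensorTensorTensorComm k H H Y Y).toLinearMap with hOm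
  -- LHS equals Om (δh ⊗ dY x)
  have e1 : wedgeOn (deltaT W.delta dY) φ' Φ' ((h ⊗ₜ[k] x) ⊗ₜ[k] b)
      = Om (W.delta h ⊗ₜ[k] dY x) := by
    simp only [hOm, wedgeOn, comp_apply, rTensor_tmul, flip_apply, mk_apply,
      LinearEquiv.coe_coe, deltaT, TensorProduct.map_tmul]
  -- Om (t ⊗ dY x) = Ψ t
  set Psi : H ⊗[k] H →ₗ[k] B :=
    φ ∘ₗ lTensor H (wedgeOn dY φY ΦY ∘ₗ TensorProduct.mk k Y B x ∘ₗ g0) with hPsiDef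
  have hPsi : Psi = Om ∘ₗ (TensorProduct.mk k (H ⊗[k] H) (Y ⊗[k] Y)).flip (dY x) := by
    apply TensorProduct.ext'
    intro p q
    have hsub : Om ∘ₗ (TensorProduct.mk k (H ⊗[k] H) (Y ⊗[k] Y) (p ⊗ₜ[k] q))
        = (φ ∘ₗ TensorProduct.mk k H B p) ∘ₗ φY ∘ₗ lTensor Y ΦY
            ∘ₗ (TensorProduct.assoc k Y Y B).toLinearMap
            ∘ₗ (TensorProduct.mk k (Y ⊗[k] Y) B).flip (g0 q) := by
      apply TensorProduct.ext'
      intro x1 x2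
      simp [hOm, hphi', hPhi', hg0]
    have h2 := LinearMap.congr_fun hsub (dY x)
    simp only [comp_apply, flip_apply, mk_apply] at h2 ⊢
    rw [h2]
    simp [hPsiDef, wedgeOn]
  have e2 : Om (W.delta h ⊗ₜ[k] dY x) = Psi (W.delta h) := by
    rw [hPsi]; simp
  -- rewrite the inner wedge with hY
  have e3 : Psi = φ ∘ₗ lTensor H (LinearMap.mulLeft k (u1 φ (mY x)) ∘ₗ g0) := by
    rw [hPsiDef, hY]
    have hinner : wbar (u1 φ ∘ₗ mY) ∘ₗ TensorProduct.mk k Y B x ∘ₗ g0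
        = LinearMap.mulLeft k (u1 φ (mY x)) ∘ₗ g0 := by
      apply LinearMap.ext
      intro c
      simp [wbar]
    rw [hinner]
  -- measuring expansion and coassociativity
  have e4 : Psi (W.delta h)
      = cB (acm φ (u1 φ (mY x))) ((φ ∘ₗ lTensor H g0) ∘ₗ W.delta) (W.delta h) := by
    rw [e3]
    have h3 := LinearMap.congr_fun (meas_mapid hφ (u1 φ (mY x)) g0) (W.delta h)
    simp only [comp_apply, LinearEquiv.coe_coe] at h3
    simp only [comp_apply]
    rw [h3, W.coassoc h]
    simp only [LinearEquiv.apply_symm_apply]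
    have h4 := LinearMap.congr_fun
        (cB_lT_delta (W := W) (acm φ (u1 φ (mY x))) (φ ∘ₗ lTensor H g0)) (W.delta h)
    simp only [comp_apply] at h4
    rw [h4]
  -- identify the inner map with u1 via hd
  have e5 : (φ ∘ₗ lTensor H g0) ∘ₗ W.delta = LinearMap.mulRight k b ∘ₗ u1 φ := by
    have hlt : lTensor H φd ∘ₗ (TensorProduct.assoc k H H B).toLinearMap
        ∘ₗ (TensorProduct.mk k (H ⊗[k] H) B).flip b = lTensor H g0 := by
      apply TensorProduct.ext'
      intro p q
      simp [hg0]
    have hwedge : (φ ∘ₗ lTensor H g0) ∘ₗ W.delta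
        = wedgeOn W.delta φ φd ∘ₗ (TensorProduct.mk k H B).flip b := by
      apply LinearMap.ext
      intro q
      have := LinearMap.congr_fun hlt (W.delta q)
      simp only [comp_apply, flip_apply, mk_apply] at this ⊢
      rw [← this]
      simp [wedgeOn]
    rw [hwedge, hd]
    apply LinearMap.ext
    intro q
    simp [wbar]
  have e6 : cB (acm φ (u1 φ (mY x))) (LinearMap.mulRight k b ∘ₗ u1 φ) (W.delta h)
      = cB (acm φ (u1 φ (mY x))) (u1 φ) (W.delta h) * b := by
    have := LinearMap.congr_fun
        (cB_mulRight (B := B) (acm φ (u1 φ (mY x))) (u1 φ) b) (W.delta h)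
    simp only [comp_apply, mulRight_apply] at this
    rw [this]
  have e7 : cB (acm φ (u1 φ (mY x))) (u1 φ) (W.delta h)
      = u1 φ (W.mu (h ⊗ₜ[k] mY x)) := by
    rw [acm_u1 hφ]
    have := LinearMap.congr_fun (AB3 hφ (mY x)) h
    simp only [comp_apply] at this
    rw [this]
    simp
  rw [e1, e2, e4, e5, e6, e7]
  simp [wbar]

lemma PhiEx (hφ : IsWMA W φ) (φd : H ⊗[k] B →ₗ[k] B)
    (hd : wedgeOn W.delta φ φd = wbar (u1 φ)) :
    ∀ n : ℕ, ∃ Φ : (HpowM k H n).carrier ⊗[k] B →ₗ[k] B,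
      wedgeOn (deltaPow W n) (phiPow φ n) Φ = wbar (uPow W φ n)
  | 0 => ⟨φd, by
      show wedgeOn W.delta φ φd = wbar (u1 φ ∘ₗ LinearMap.id)
      rw [LinearMap.comp_id]; exact hd⟩
  | n + 1 => by
      obtain ⟨Φ, hΦ⟩ := PhiEx hφ φd hd n
      refine ⟨Φ ∘ₗ lTensor (HpowM k H n).carrier φd
        ∘ₗ (TensorProduct.leftComm k H (HpowM k H n).carrier B).toLinearMap
        ∘ₗ (TensorProduct.assoc k H (HpowM k H n).carrier B).toLinearMap, ?_⟩
      exact F1step hφ φd hd (deltaPow W n) (phiPow φ n) (mPow W n) Φ hΦ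

end F1

section finalsec
variable {W : WeakBialgebraStr k H} {φ : H ⊗[k] B →ₗ[k] B}
variable {X : Type} [AddCommGroup X] [Module k X]

lemma wbar_wsub (D : X →ₗ[k] X ⊗[k] X) (f g : X →ₗ[k] B) :
    wbar f ∘ₗ wsub D (wbar g) = wbar (convOn D f g) := by
  apply TensorProduct.ext'
  intro x b
  have hmap : wbar f ∘ₗ lTensor X (wbar g) ∘ₗ (TensorProduct.assoc k X X B).toLinearMap
        ∘ₗ (TensorProduct.mk k (X ⊗[k] X) B).flip b
      = LinearMap.mulRight k b ∘ₗ cB f g := by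
    apply TensorProduct.ext'
    intro p q
    simp [wbar, mul_assoc]
  have := LinearMap.congr_fun hmap (D x)
  simp only [comp_apply, flip_apply, mk_apply, mulRight_apply, LinearEquiv.coe_coe] at this
  simp only [wsub, comp_apply, rTensor_tmul, LinearEquiv.coe_coe]
  rw [this]
  simp [wbar, convOn_eq]

lemma wbarOp_wsub (D : X →ₗ[k] X ⊗[k] X) (f uN : X →ₗ[k] B)
    (huc : ∀ (y : X) (c : B), uN y * c = c * uN y) :
    wbarOp f ∘ₗ wsub D (wbar uN) = wbarOp (convOn D f uN) := by
  apply TensorProduct.ext'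
  intro x b
  have hmap : wbarOp f ∘ₗ lTensor X (wbar uN) ∘ₗ (TensorProduct.assoc k X X B).toLinearMap
        ∘ₗ (TensorProduct.mk k (X ⊗[k] X) B).flip b
      = LinearMap.mulLeft k b ∘ₗ cB f uN := by
    apply TensorProduct.ext'
    intro p q
    simp only [comp_apply, flip_apply, mk_apply, LinearEquiv.coe_coe,
      TensorProduct.assoc_tmul, lTensor_tmul, mulLeft_apply, cB_tmul]
    simp only [wbar, wbarOp, comp_apply, rTensor_tmul, LinearEquiv.coe_coe,
      TensorProduct.comm_tmul, mul'_apply]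
    rw [huc q b, mul_assoc, huc q (f p), ← mul_assoc]
  have := LinearMap.congr_fun hmap (D x)
  simp only [comp_apply, flip_apply, mk_apply, mulLeft_apply, LinearEquiv.coe_coe] at this
  simp only [wsub, comp_apply, rTensor_tmul, LinearEquiv.coe_coe]
  rw [this]
  simp [wbarOp, convOn_eq]

end finalsec
end WKproof4
open WK in
theorem statement13 {k : Type} [CommRing k] {H : Type} [AddCommGroup H] [Module k H]
    {B : Type} [Ring B] [Algebra k B]
    (W : WeakHopfStr k H) (hco : Cocomm W.toWeakBialgebraStr)
    (φ : H ⊗[k] B →ₗ[k] B) (hφ : IsWMA W.toWeakBialgebraStr φ)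
    (hinv : ∃ φd : H ⊗[k] B →ₗ[k] B,
      wedgeOn W.toWeakBialgebraStr.delta φ φd = wbar (u1 φ))
    (n : ℕ) (ω ωi : (HpowM k H n).carrier →ₗ[k] B)
    (hreg : RegPair (deltaPow W.toWeakBialgebraStr n)
      (uPow W.toWeakBialgebraStr φ n) ω ωi) :
    wedgeOn (deltaPow W.toWeakBialgebraStr n) (wbar ω) (phiPow φ n)
        = wedgeOn (deltaPow W.toWeakBialgebraStr n) (wbarOp ω) (phiPow φ n)
      ↔ ∀ (x : (HpowM k H n).carrier) (b : B), ω x * b = b * ω x := by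
  set Wb := W.toWeakBialgebraStr with hWb
  set D := deltaPow Wb n with hD0
  set uN := uPow Wb φ n with huN
  set φn := phiPow φ n with hφn
  constructor
  · intro HYP
    obtain ⟨φd, hd⟩ := hinv
    obtain ⟨Φ, hΦ⟩ := WKproof4.PhiEx hφ φd hd n
    have hD : WKproof4.CoassocP D := WKproof4.DPcoassoc Wb n
    have huc : ∀ (y : (HpowM k H n).carrier) (c : B), uN y * c = c * uN y := by
      intro y c
      have := WKproof3.u1_central hco hφ W.lam W.antipode_r (mPow Wb n y) c
      simpa [huN, uPow] using this
    have r1 := hreg.1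
    have hUω : convOn D uN ω = ω := by rw [← r1]; exact hreg.2.2.1
    have hωU : convOn D ω uN = ω := by
      calc convOn D ω uN = convOn D ω (convOn D ωi ω) := by rw [hreg.2.1]
        _ = convOn D (convOn D ω ωi) ω := (WKproof4.convOn_assoc hD ω ωi ω).symm
        _ = convOn D uN ω := by rw [r1]
        _ = ω := hUω
    have hcomp : wbar ω = wbarOp ω := by
      have h1 : wedgeOn D (wbar ω) φn ∘ₗ WKproof4.wsub D Φ
          = wedgeOn D (wbarOp ω) φn ∘ₗ WKproof4.wsub D Φ := by rw [HYP]
      rw [WKproof4.wedgeOn_eq D (wbar ω) φn, WKproof4.wedgeOn_eq D (wbarOp ω) φn,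
        LinearMap.comp_assoc, LinearMap.comp_assoc, WKproof4.wsub_wsub hD] at h1
      have h2 : φn ∘ₗ WKproof4.wsub D Φ = wbar uN := by
        rw [← WKproof4.wedgeOn_eq]; exact hΦ
      rw [h2, WKproof4.wbar_wsub, WKproof4.wbarOp_wsub D ω uN huc, hωU] at h1
      exact h1
    intro x b
    have := LinearMap.congr_fun hcomp (x ⊗ₜ[k] b)
    simpa [wbar, wbarOp] using this
  · intro hc
    have hbar : wbar ω = wbarOp ω := by
      apply TensorProduct.ext'
      intro x b
      simp [wbar, wbarOp, hc]
    rw [hbar]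
end
end

section
/- Let H be a cocommutative weak Hopf algebra, (B,φ_B) a left weak H-module algebra with φ_B being φ_B-invertible. If ω ∈ Reg_{φ_B}(H^{⊗n},B) satisfies ω̄ ∧ φ_B^{⊗n} = ω̄^{op} ∧ φ_B^{⊗n}, then its convolution inverse ω^{-1} also satisfies (ω^{-1})‾ ∧ φ_B^{⊗n} = (ω^{-1})‾^{op} ∧ φ_B^{⊗n}; consequently ω^{-1} also factors through the center of B. -/
open TensorProduct LinearMap

noncomputable section

namespace WK

variable {k : Type} [CommRing k] {H : Type} [AddCommGroup H] [Module k H]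

variable {B : Type} [Ring B] [Algebra k B]

/-! ### Auxiliary development for statement14 -/

section Aux14

variable {k : Type} [CommRing k] {H : Type} [AddCommGroup H] [Module k H]
variable {B : Type} [Ring B] [Algebra k B]

/-- `(a ↦ f (a ⊗ c))` as a linear map. -/
def app2 {X : Type} [AddCommGroup X] [Module k X]
    (f : X ⊗[k] B →ₗ[k] B) (c : B) : X →ₗ[k] B :=
  f ∘ₗ (TensorProduct.mk k X B).flip c

@[simp] lemma app2_apply {X : Type} [AddCommGroup X] [Module k X]
    (f : X ⊗[k] B →ₗ[k] B) (c : B) (a : X) : app2 f c a = f (a ⊗ₜ[k] c) := rfl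

/-- `mulB ∘ (F ⊗ G)` : the basic Sweedler-sum gadget. -/
def mm {M N : Type} [AddCommGroup M] [Module k M] [AddCommGroup N] [Module k N]
    (F : M →ₗ[k] B) (G : N →ₗ[k] B) : M ⊗[k] N →ₗ[k] B :=
  LinearMap.mul' k B ∘ₗ TensorProduct.map F G

@[simp] lemma mm_tmul {M N : Type} [AddCommGroup M] [Module k M] [AddCommGroup N] [Module k N]
    (F : M →ₗ[k] B) (G : N →ₗ[k] B) (m : M) (n : N) :
    mm F G (m ⊗ₜ[k] n) = F m * G n := by
  simp [mm]

lemma mm_mulRight {M N : Type} [AddCommGroup M] [Module k M] [AddCommGroup N] [Module k N]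
    (F : M →ₗ[k] B) (G : N →ₗ[k] B) (c : B) (t : M ⊗[k] N) :
    mm F (LinearMap.mulRight k c ∘ₗ G) t = mm F G t * c := by
  induction t using TensorProduct.induction_on with
  | zero => simp
  | tmul m n => simp [mul_assoc]
  | add x y hx hy => simp [map_add, hx, hy, add_mul]

lemma congr_mm₂ {M N : Type} [AddCommGroup M] [Module k M] [AddCommGroup N] [Module k N]
    {F F' : M →ₗ[k] B} {G G' : N →ₗ[k] B} (hF : F = F') (hG : G = G') :
    mm F G = mm F' G' := by rw [hF, hG]

end Aux14

section Aux14B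

variable {k : Type} [CommRing k] {H : Type} [AddCommGroup H] [Module k H]
variable {B : Type} [Ring B] [Algebra k B]

/-- right multiplication on `H`. -/
def rmulH (W : WeakBialgebraStr k H) (g : H) : H →ₗ[k] H :=
  W.mu ∘ₗ (TensorProduct.mk k H H).flip g

@[simp] lemma rmulH_apply (W : WeakBialgebraStr k H) (g a : H) :
    rmulH W g a = W.mu (a ⊗ₜ[k] g) := rfl

lemma u1_apply (φ : H ⊗[k] B →ₗ[k] B) (h : H) : u1 φ h = φ (h ⊗ₜ[k] 1) := rfl

variable {W : WeakBialgebraStr k H} {φ : H ⊗[k] B →ₗ[k] B}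

lemma meas_mm (hm : IsMeasuring W φ) (x : H) (c d : B) :
    φ (x ⊗ₜ[k] (c * d)) = mm (app2 φ c) (app2 φ d) (W.delta x) := by
  rw [hm]
  generalize W.delta x = t
  induction t using TensorProduct.induction_on with
  | zero => simp [TensorProduct.zero_tmul]
  | tmul a e => simp
  | add s t hs ht =>
      simp only [TensorProduct.add_tmul, map_add, hs, ht]

lemma phi_mul (hm : IsMeasuring W φ) (h : H) (z : B ⊗[k] B) :
    φ (h ⊗ₜ[k] LinearMap.mul' k B z)
      = LinearMap.mul' k B (TensorProduct.map φ φ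
          (tensorTensorTensorComm k H H B B (W.delta h ⊗ₜ[k] z))) := by
  induction z using TensorProduct.induction_on with
  | zero => simp [TensorProduct.tmul_zero]
  | tmul b c => simpa using hm h b c
  | add z z' hz hz' =>
      simp only [map_add, TensorProduct.tmul_add, hz, hz']

end Aux14B

section Aux14C

variable {k : Type} [CommRing k] {H : Type} [AddCommGroup H] [Module k H]
variable {B : Type} [Ring B] [Algebra k B]
variable {W : WeakBialgebraStr k H} {φ : H ⊗[k] B →ₗ[k] B}

lemma app2_one : app2 φ (1 : B) = u1 φ := rfl

lemma u1_one (hu : ∀ b : B, φ (W.one ⊗ₜ[k] b) = b) : u1 φ W.one = 1 := by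
  rw [u1_apply, hu]

lemma app2_u1 (hn : ∀ x y : H, u1 φ (W.mu (x ⊗ₜ[k] y)) = φ (x ⊗ₜ[k] u1 φ y)) (g : H) :
    app2 φ (u1 φ g) = u1 φ ∘ₗ rmulH W g := by
  ext a
  simp [hn a g]

lemma m2u (hm : IsMeasuring W φ) (x : H) (c : B) :
    mm (u1 φ) (app2 φ c) (W.delta x) = φ (x ⊗ₜ[k] c) := by
  have h := meas_mm hm x (1 : B) c
  rw [one_mul, app2_one] at h
  exact h.symm

lemma m2u' (hm : IsMeasuring W φ) (x : H) (c : B) :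
    mm (app2 φ c) (u1 φ) (W.delta x) = φ (x ⊗ₜ[k] c) := by
  have h := meas_mm hm x c (1 : B)
  rw [mul_one, app2_one] at h
  exact h.symm

lemma mNx (hm : IsMeasuring W φ)
    (hn : ∀ x y : H, u1 φ (W.mu (x ⊗ₜ[k] y)) = φ (x ⊗ₜ[k] u1 φ y)) (x g : H) :
    mm (u1 φ ∘ₗ rmulH W g) (u1 φ) (W.delta x) = u1 φ (W.mu (x ⊗ₜ[k] g)) := by
  rw [← app2_u1 hn g, m2u' hm, hn]

lemma R3 (hm : IsMeasuring W φ) (hu : ∀ b : B, φ (W.one ⊗ₜ[k] b) = b)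
    (hn : ∀ x y : H, u1 φ (W.mu (x ⊗ₜ[k] y)) = φ (x ⊗ₜ[k] u1 φ y)) (y : H) (c : B) :
    c * u1 φ y = mm (app2 φ c) (u1 φ ∘ₗ rmulH W y) (W.delta W.one) := by
  conv_lhs => rw [← hu (c * u1 φ y)]
  rw [meas_mm hm W.one c (u1 φ y), app2_u1 hn y]

lemma R3' (hm : IsMeasuring W φ) (hu : ∀ b : B, φ (W.one ⊗ₜ[k] b) = b)
    (hn : ∀ x y : H, u1 φ (W.mu (x ⊗ₜ[k] y)) = φ (x ⊗ₜ[k] u1 φ y)) (y : H) (c : B) :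
    u1 φ y * c = mm (u1 φ ∘ₗ rmulH W y) (app2 φ c) (W.delta W.one) := by
  conv_lhs => rw [← hu (u1 φ y * c)]
  rw [meas_mm hm W.one (u1 φ y) c, app2_u1 hn y]

end Aux14C

section Aux14D

variable {k : Type} [CommRing k] {H : Type} [AddCommGroup H] [Module k H]
variable {B : Type} [Ring B] [Algebra k B]

/-- `a ↦ ε(a·h)·1_B`. -/
def uek (W : WeakBialgebraStr k H) (B : Type) [Ring B] [Algebra k B] (h : H) : H →ₗ[k] B :=
  Algebra.linearMap k B ∘ₗ W.eps ∘ₗ rmulH W h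

@[simp] lemma uek_apply (W : WeakBialgebraStr k H) (h a : H) :
    uek W B h a = algebraMap k B (W.eps (W.mu (a ⊗ₜ[k] h))) := rfl

variable {W : WeakBialgebraStr k H} {φ : H ⊗[k] B →ₗ[k] B}

lemma u1_piL_mm (h : H) :
    u1 φ (W.piL h) = mm (uek W B h) (u1 φ) (W.delta W.one) := by
  rw [WeakBialgebraStr.piL]
  simp only [comp_apply, LinearEquiv.coe_coe, TensorProduct.mk_apply]
  generalize W.delta W.one = t
  induction t using TensorProduct.induction_on with
  | zero => simp
  | tmul a e =>
      simp [WeakBialgebraStr.epsmu, Algebra.smul_def]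
  | add s t hs ht =>
      simp only [TensorProduct.add_tmul, map_add, hs, ht]

/-- `((p⊗q)⊗e) ↦ (p⊗e)⊗q`. -/
def shufE (k H : Type) [CommRing k] [AddCommGroup H] [Module k H] :
    (H ⊗[k] H) ⊗[k] H →ₗ[k] (H ⊗[k] H) ⊗[k] H :=
  (TensorProduct.assoc k H H H).symm.toLinearMap ∘ₗ lTensor H (TensorProduct.comm k H H).toLinearMap
    ∘ₗ (TensorProduct.assoc k H H H).toLinearMap

@[simp] lemma shufE_tmul (p q e : H) :
    shufE k H ((p ⊗ₜ[k] q) ⊗ₜ[k] e) = (p ⊗ₜ[k] e) ⊗ₜ[k] q := by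
  simp [shufE]

/-- `((a⊗e)⊗(p⊗q)) ↦ a⊗((p⊗e)⊗q)`. -/
def sshuf (k H : Type) [CommRing k] [AddCommGroup H] [Module k H] :
    (H ⊗[k] H) ⊗[k] (H ⊗[k] H) →ₗ[k] H ⊗[k] ((H ⊗[k] H) ⊗[k] H) :=
  lTensor H (rTensor H (TensorProduct.comm k H H).toLinearMap
      ∘ₗ (TensorProduct.assoc k H H H).symm.toLinearMap)
    ∘ₗ (TensorProduct.assoc k H H (H ⊗[k] H)).toLinearMap

@[simp] lemma sshuf_tmul (a e p q : H) :
    sshuf k H ((a ⊗ₜ[k] e) ⊗ₜ[k] (p ⊗ₜ[k] q)) = a ⊗ₜ[k] ((p ⊗ₜ[k] e) ⊗ₜ[k] q) := by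
  simp [sshuf]

/-- `((a⊗e)⊗(p⊗q)) ↦ a⊗(p⊗(q⊗e))`. -/
def sshuf' (k H : Type) [CommRing k] [AddCommGroup H] [Module k H] :
    (H ⊗[k] H) ⊗[k] (H ⊗[k] H) →ₗ[k] H ⊗[k] (H ⊗[k] (H ⊗[k] H)) :=
  lTensor H ((TensorProduct.assoc k H H H).toLinearMap
      ∘ₗ (TensorProduct.comm k H (H ⊗[k] H)).toLinearMap)
    ∘ₗ (TensorProduct.assoc k H H (H ⊗[k] H)).toLinearMap

@[simp] lemma sshuf'_tmul (a e p q : H) :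
    sshuf' k H ((a ⊗ₜ[k] e) ⊗ₜ[k] (p ⊗ₜ[k] q)) = a ⊗ₜ[k] (p ⊗ₜ[k] (q ⊗ₜ[k] e)) := by
  simp [sshuf']

lemma T2lem : (lTensor H (rTensor H W.mu)) (sshuf k H (W.delta W.one ⊗ₜ[k] W.delta W.one))
    = lTensor H W.delta (W.delta W.one) := by
  have h1 : ∀ s t : H ⊗[k] H,
      (lTensor H (rTensor H W.mu)) (sshuf k H (s ⊗ₜ[k] t))
      = (TensorProduct.assoc k H H H)
          ((rTensor H (lTensor H (W.mu ∘ₗ (TensorProduct.comm k H H).toLinearMap)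
            ∘ₗ (TensorProduct.assoc k H H H).toLinearMap))
          ((TensorProduct.assoc k (H ⊗[k] H) H H).symm (s ⊗ₜ[k] t))) := by
    intro s t
    induction s using TensorProduct.induction_on with
    | zero => simp [TensorProduct.zero_tmul]
    | tmul a e =>
        induction t using TensorProduct.induction_on with
        | zero => simp [TensorProduct.tmul_zero]
        | tmul p q => simp
        | add z z' hz hz' => simp only [TensorProduct.tmul_add, map_add, hz, hz']
    | add s s' hs hs' => simp only [TensorProduct.add_tmul, map_add, hs, hs']
  rw [h1, ← W.a3', W.coassoc]
  simp

lemma T1lem (hco : Cocomm W) :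
    (lTensor H (lTensor H W.mu)) (sshuf' k H (W.delta W.one ⊗ₜ[k] W.delta W.one))
    = lTensor H W.delta (W.delta W.one) := by
  have h2 : ∀ s t : H ⊗[k] H,
      (lTensor H (lTensor H W.mu)) (sshuf' k H (s ⊗ₜ[k] t))
      = lTensor H (TensorProduct.comm k H H).toLinearMap
          ((lTensor H (rTensor H W.mu)) (sshuf k H (s ⊗ₜ[k] (TensorProduct.comm k H H t)))) := by
    intro s t
    induction s using TensorProduct.induction_on with
    | zero => simp [TensorProduct.zero_tmul]
    | tmul a e =>
        induction t using TensorProduct.induction_on with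
        | zero => simp [TensorProduct.tmul_zero]
        | tmul p q => simp
        | add z z' hz hz' => simp only [TensorProduct.tmul_add, map_add, hz, hz']
    | add s s' hs hs' => simp only [TensorProduct.add_tmul, map_add, hs, hs']
  rw [h2, hco W.one, T2lem]
  have h3 : lTensor H (TensorProduct.comm k H H).toLinearMap ∘ₗ lTensor H W.delta
      = lTensor H W.delta := by
    rw [← lTensor_comp]
    congr 1
    exact LinearMap.ext hco
  calc lTensor H (TensorProduct.comm k H H).toLinearMap (lTensor H W.delta (W.delta W.one))
      = (lTensor H (TensorProduct.comm k H H).toLinearMap ∘ₗ lTensor H W.delta) (W.delta W.one) := rfl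
    _ = lTensor H W.delta (W.delta W.one) := by rw [h3]

end Aux14D

section Aux14E

variable {k : Type} [CommRing k] {H : Type} [AddCommGroup H] [Module k H]
variable {B : Type} [Ring B] [Algebra k B]
variable {W : WeakBialgebraStr k H} {φ : H ⊗[k] B →ₗ[k] B}

lemma shufE_eq (t : H ⊗[k] H) (e : H) :
    shufE k H (t ⊗ₜ[k] e)
      = rTensor H (TensorProduct.comm k H H).toLinearMap
          ((TensorProduct.assoc k H H H).symm (e ⊗ₜ[k] t)) := by
  induction t using TensorProduct.induction_on with
  | zero => simp [TensorProduct.zero_tmul, TensorProduct.tmul_zero]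
  | tmul p q => simp
  | add s s' hs hs' =>
      simp only [TensorProduct.add_tmul, TensorProduct.tmul_add, map_add, hs, hs']

lemma Ge_eq (hm : IsMeasuring W φ) (hu : ∀ b : B, φ (W.one ⊗ₜ[k] b) = b)
    (hn : ∀ x y : H, u1 φ (W.mu (x ⊗ₜ[k] y)) = φ (x ⊗ₜ[k] u1 φ y)) (c : B) :
    LinearMap.mulRight k c ∘ₗ u1 φ
      = mm (u1 φ ∘ₗ W.mu) (app2 φ c) ∘ₗ shufE k H
          ∘ₗ TensorProduct.mk k (H ⊗[k] H) H (W.delta W.one) := by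
  ext e
  simp only [comp_apply, mulRight_apply, TensorProduct.mk_apply]
  rw [R3' hm hu hn e c]
  generalize W.delta W.one = t
  induction t using TensorProduct.induction_on with
  | zero => simp
  | tmul p q => simp
  | add s s' hs hs' => simp only [TensorProduct.add_tmul, map_add, hs, hs']

lemma Ge'_eq (hm : IsMeasuring W φ) (hu : ∀ b : B, φ (W.one ⊗ₜ[k] b) = b)
    (hn : ∀ x y : H, u1 φ (W.mu (x ⊗ₜ[k] y)) = φ (x ⊗ₜ[k] u1 φ y)) (c : B) :
    LinearMap.mulLeft k c ∘ₗ u1 φ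
      = mm (app2 φ c) (u1 φ ∘ₗ W.mu) ∘ₗ (TensorProduct.assoc k H H H).toLinearMap
          ∘ₗ TensorProduct.mk k (H ⊗[k] H) H (W.delta W.one) := by
  ext e
  simp only [comp_apply, mulLeft_apply, TensorProduct.mk_apply, LinearEquiv.coe_coe]
  rw [R3 hm hu hn e c]
  generalize W.delta W.one = t
  induction t using TensorProduct.induction_on with
  | zero => simp
  | tmul p q => simp
  | add s s' hs hs' => simp only [TensorProduct.add_tmul, map_add, hs, hs']

lemma hP2 (F : H →ₗ[k] B) (G : (H ⊗[k] H) →ₗ[k] B) (G' : H →ₗ[k] B) (s t : H ⊗[k] H) :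
    mm F (mm G G' ∘ₗ shufE k H ∘ₗ TensorProduct.mk k (H ⊗[k] H) H t) s
      = (LinearMap.mul' k B ∘ₗ TensorProduct.map F (mm G G')) (sshuf k H (s ⊗ₜ[k] t)) := by
  induction s using TensorProduct.induction_on with
  | zero => simp [TensorProduct.zero_tmul]
  | tmul a e =>
      simp only [mm_tmul, comp_apply, TensorProduct.mk_apply]
      rw [shufE_eq]
      induction t using TensorProduct.induction_on with
      | zero => simp [TensorProduct.tmul_zero]
      | tmul p q => simp
      | add z z' hz hz' =>
          simp only [TensorProduct.tmul_add, map_add, hz, hz', mul_add]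
  | add s s' hs hs' => simp only [TensorProduct.add_tmul, map_add, hs, hs']

lemma hP2' (F : H →ₗ[k] B) (G : H →ₗ[k] B) (G' : (H ⊗[k] H) →ₗ[k] B) (s t : H ⊗[k] H) :
    mm F (mm G G' ∘ₗ (TensorProduct.assoc k H H H).toLinearMap
        ∘ₗ TensorProduct.mk k (H ⊗[k] H) H t) s
      = (LinearMap.mul' k B ∘ₗ TensorProduct.map F (mm G G')) (sshuf' k H (s ⊗ₜ[k] t)) := by
  induction s using TensorProduct.induction_on with
  | zero => simp [TensorProduct.zero_tmul]
  | tmul a e =>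
      simp only [mm_tmul, comp_apply, TensorProduct.mk_apply]
      induction t using TensorProduct.induction_on with
      | zero => simp [TensorProduct.tmul_zero]
      | tmul p q =>
          simp
      | add z z' hz hz' =>
          simp only [TensorProduct.tmul_add, TensorProduct.add_tmul, map_add, hz, hz', mul_add]
  | add s s' hs hs' => simp only [TensorProduct.add_tmul, map_add, hs, hs']

end Aux14E

section Aux14F

variable {k : Type} [CommRing k] {H : Type} [AddCommGroup H] [Module k H]
variable {B : Type} [Ring B] [Algebra k B]

lemma map_lT {M N N' : Type} [AddCommGroup M] [Module k M] [AddCommGroup N] [Module k N]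
    [AddCommGroup N'] [Module k N'] {P : Type} [AddCommGroup P] [Module k P]
    (F : M →ₗ[k] P) (G : N' →ₗ[k] P) (g : N →ₗ[k] N') :
    TensorProduct.map F (G ∘ₗ g) = TensorProduct.map F G ∘ₗ lTensor M g := by
  have : lTensor M g = TensorProduct.map LinearMap.id g := rfl
  rw [this, ← TensorProduct.map_comp, LinearMap.comp_id]

lemma map_rT {M M' N : Type} [AddCommGroup M] [Module k M] [AddCommGroup N] [Module k N]
    [AddCommGroup M'] [Module k M'] {P : Type} [AddCommGroup P] [Module k P]
    (F : M' →ₗ[k] P) (G : N →ₗ[k] P) (f : M →ₗ[k] M') :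
    TensorProduct.map (F ∘ₗ f) G = TensorProduct.map F G ∘ₗ rTensor N f := by
  have : rTensor N f = TensorProduct.map f LinearMap.id := rfl
  rw [this, ← TensorProduct.map_comp, LinearMap.comp_id]

lemma mm_rT {M M' N : Type} [AddCommGroup M] [Module k M] [AddCommGroup N] [Module k N]
    [AddCommGroup M'] [Module k M'] (F : M' →ₗ[k] B) (f : M →ₗ[k] M') (G : N →ₗ[k] B) :
    mm F G ∘ₗ rTensor N f = mm (F ∘ₗ f) G := by
  unfold mm
  rw [map_rT F G f, ← LinearMap.comp_assoc]

lemma mm_lT {M N N' : Type} [AddCommGroup M] [Module k M] [AddCommGroup N] [Module k N]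
    [AddCommGroup N'] [Module k N'] (F : M →ₗ[k] B) (G : N' →ₗ[k] B) (g : N →ₗ[k] N') :
    mm F G ∘ₗ lTensor M g = mm F (G ∘ₗ g) := by
  unfold mm
  rw [map_lT F G g, ← LinearMap.comp_assoc]

variable {W : WeakBialgebraStr k H} {φ : H ⊗[k] B →ₗ[k] B}

lemma Y2w (hm : IsMeasuring W φ) (hu : ∀ b : B, φ (W.one ⊗ₜ[k] b) = b)
    (hn : ∀ x y : H, u1 φ (W.mu (x ⊗ₜ[k] y)) = φ (x ⊗ₜ[k] u1 φ y)) (h : H) (c : B) :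
    mm (uek W B h) (LinearMap.mulRight k c ∘ₗ u1 φ) (W.delta W.one)
      = mm (uek W B h) (app2 φ c) (W.delta W.one) := by
  rw [Ge_eq hm hu hn c, hP2]
  have e1 : mm (u1 φ ∘ₗ W.mu) (app2 φ c) = mm (u1 φ) (app2 φ c) ∘ₗ rTensor H W.mu :=
    (mm_rT _ _ _).symm
  rw [e1, map_lT]
  simp only [comp_apply]
  rw [T2lem]
  rw [← comp_apply (TensorProduct.map _ _) (lTensor H W.delta), ← map_lT]
  have h5 : mm (u1 φ) (app2 φ c) ∘ₗ W.delta = app2 φ c := by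
    ext e
    simp only [comp_apply, app2_apply]
    exact m2u hm e c
  rw [h5]
  rfl

lemma Y1w (hm : IsMeasuring W φ) (hu : ∀ b : B, φ (W.one ⊗ₜ[k] b) = b)
    (hn : ∀ x y : H, u1 φ (W.mu (x ⊗ₜ[k] y)) = φ (x ⊗ₜ[k] u1 φ y)) (hco : Cocomm W)
    (h : H) (c : B) :
    mm (uek W B h) (LinearMap.mulLeft k c ∘ₗ u1 φ) (W.delta W.one)
      = mm (uek W B h) (app2 φ c) (W.delta W.one) := by
  rw [Ge'_eq hm hu hn c, hP2']
  have e1 : mm (app2 φ c) (u1 φ ∘ₗ W.mu) = mm (app2 φ c) (u1 φ) ∘ₗ lTensor H W.mu :=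
    (mm_lT _ _ _).symm
  rw [e1, map_lT]
  simp only [comp_apply]
  rw [T1lem hco]
  rw [← comp_apply (TensorProduct.map _ _) (lTensor H W.delta), ← map_lT]
  have h5 : mm (app2 φ c) (u1 φ) ∘ₗ W.delta = app2 φ c := by
    ext e
    simp only [comp_apply, app2_apply]
    exact m2u' hm e c
  rw [h5]
  rfl

end Aux14F

section Aux14G

variable {k : Type} [CommRing k] {H : Type} [AddCommGroup H] [Module k H]
variable {B : Type} [Ring B] [Algebra k B]
variable {W : WeakBialgebraStr k H} {φ : H ⊗[k] B →ₗ[k] B}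

lemma mm_mulLeft_uek (h : H) (G : H →ₗ[k] B) (c : B) (t : H ⊗[k] H) :
    c * mm (uek W B h) G t = mm (uek W B h) (LinearMap.mulLeft k c ∘ₗ G) t := by
  induction t using TensorProduct.induction_on with
  | zero => simp
  | tmul a e =>
      simp only [mm_tmul, comp_apply, mulLeft_apply, uek_apply]
      rw [← mul_assoc, ← Algebra.commutes, mul_assoc]
  | add s s' hs hs' => simp only [map_add, mul_add, hs, hs']

lemma piL_mul (hm : IsMeasuring W φ) (hu : ∀ b : B, φ (W.one ⊗ₜ[k] b) = b)
    (hn : ∀ x y : H, u1 φ (W.mu (x ⊗ₜ[k] y)) = φ (x ⊗ₜ[k] u1 φ y)) (h : H) (c : B) :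
    u1 φ (W.piL h) * c = mm (uek W B h) (app2 φ c) (W.delta W.one) := by
  rw [u1_piL_mm, ← mm_mulRight, Y2w hm hu hn]

lemma mul_piL (hm : IsMeasuring W φ) (hu : ∀ b : B, φ (W.one ⊗ₜ[k] b) = b)
    (hn : ∀ x y : H, u1 φ (W.mu (x ⊗ₜ[k] y)) = φ (x ⊗ₜ[k] u1 φ y)) (hco : Cocomm W)
    (h : H) (c : B) :
    c * u1 φ (W.piL h) = mm (uek W B h) (app2 φ c) (W.delta W.one) := by
  rw [u1_piL_mm, mm_mulLeft_uek, Y1w hm hu hn hco]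

lemma piL_central (hm : IsMeasuring W φ) (hu : ∀ b : B, φ (W.one ⊗ₜ[k] b) = b)
    (hn : ∀ x y : H, u1 φ (W.mu (x ⊗ₜ[k] y)) = φ (x ⊗ₜ[k] u1 φ y)) (hco : Cocomm W)
    (h : H) (c : B) :
    u1 φ (W.piL h) * c = c * u1 φ (W.piL h) := by
  rw [piL_mul hm hu hn, mul_piL hm hu hn hco]

lemma Blem (hm : IsMeasuring W φ) (hu : ∀ b : B, φ (W.one ⊗ₜ[k] b) = b)
    (hn : ∀ x y : H, u1 φ (W.mu (x ⊗ₜ[k] y)) = φ (x ⊗ₜ[k] u1 φ y)) (x : H) :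
    mm (u1 φ ∘ₗ W.piL) (u1 φ) (W.delta x) = u1 φ x := by
  have hmap : mm (u1 φ ∘ₗ W.piL) (u1 φ)
      = (TensorProduct.lid k B).toLinearMap
          ∘ₗ TensorProduct.map (W.eps ∘ₗ W.mu) (u1 φ ∘ₗ W.mu)
          ∘ₗ (tensorTensorTensorComm k H H H H).toLinearMap
          ∘ₗ TensorProduct.mk k (H ⊗[k] H) (H ⊗[k] H) (W.delta W.one) := by
    apply TensorProduct.ext'
    intro p q
    simp only [mm_tmul, comp_apply, TensorProduct.mk_apply, LinearEquiv.coe_coe]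
    rw [piL_mul hm hu hn p (u1 φ q), app2_u1 hn q]
    generalize W.delta W.one = t
    induction t using TensorProduct.induction_on with
    | zero => simp
    | tmul a e => simp [Algebra.smul_def]
    | add s s' hs hs' => simp only [TensorProduct.add_tmul, map_add, hs, hs']
  rw [hmap]
  simp only [comp_apply, LinearEquiv.coe_coe, TensorProduct.mk_apply]
  rw [show TensorProduct.map (W.eps ∘ₗ W.mu) (u1 φ ∘ₗ W.mu)
      = TensorProduct.map W.eps (u1 φ) ∘ₗ TensorProduct.map W.mu W.mu from
    TensorProduct.map_comp _ _ _ _]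
  have hA1 : TensorProduct.map W.mu W.mu
      (tensorTensorTensorComm k H H H H (W.delta W.one ⊗ₜ[k] W.delta x)) = W.delta x := by
    rw [← W.a1 W.one x, W.one_mul']
  simp only [comp_apply]
  rw [hA1]
  have hCU : ∀ t : H ⊗[k] H,
      TensorProduct.lid k B (TensorProduct.map W.eps (u1 φ) t)
        = u1 φ (TensorProduct.lid k H (rTensor H W.eps t)) := by
    intro t
    induction t using TensorProduct.induction_on with
    | zero => simp
    | tmul a e => simp
    | add s s' hs hs' => simp only [map_add, hs, hs']
  rw [hCU, W.counit_l]

end Aux14G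

section Aux14H

variable {k : Type} [CommRing k] {H : Type} [AddCommGroup H] [Module k H]
variable {B : Type} [Ring B] [Algebra k B]
variable {W : WeakBialgebraStr k H} {φ : H ⊗[k] B →ₗ[k] B}

lemma hNmap (hn : ∀ x y : H, u1 φ (W.mu (x ⊗ₜ[k] y)) = φ (x ⊗ₜ[k] u1 φ y))
    (z : H ⊗[k] H) : u1 φ (W.mu z) = φ (lTensor H (u1 φ) z) := by
  induction z using TensorProduct.induction_on with
  | zero => simp
  | tmul x y => simpa using hn x y
  | add s s' hs hs' => simp only [map_add, hs, hs']

lemma PM2 (hm : IsMeasuring W φ) (G : H →ₗ[k] B) (t : H ⊗[k] H) :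
    (LinearMap.mul' k B ∘ₗ TensorProduct.map (φ ∘ₗ TensorProduct.map LinearMap.id G) (u1 φ)
        ∘ₗ shufE k H) (rTensor H W.delta t)
      = φ (TensorProduct.map LinearMap.id G t) := by
  induction t using TensorProduct.induction_on with
  | zero => simp
  | tmul y r =>
      simp only [rTensor_tmul, comp_apply, map_tmul]
      have hinner : ∀ s : H ⊗[k] H,
          (LinearMap.mul' k B) (TensorProduct.map (φ ∘ₗ TensorProduct.map LinearMap.id G) (u1 φ)
            (shufE k H (s ⊗ₜ[k] r))) = mm (app2 φ (G r)) (u1 φ) s := by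
        intro s
        induction s using TensorProduct.induction_on with
        | zero => simp [TensorProduct.zero_tmul]
        | tmul p q => simp
        | add w w' hw hw' =>
            simp only [TensorProduct.add_tmul, map_add, hw, hw']
      rw [hinner, m2u' hm]
      simp
  | add s s' hs hs' => simp only [map_add, hs, hs']

lemma u1_piL_eq (Wh : WeakHopfStr k H) {φ : H ⊗[k] B →ₗ[k] B}
    (hm : IsMeasuring Wh.toWeakBialgebraStr φ)
    (hu : ∀ b : B, φ (Wh.toWeakBialgebraStr.one ⊗ₜ[k] b) = b)
    (hn : ∀ x y : H, u1 φ (Wh.toWeakBialgebraStr.mu (x ⊗ₜ[k] y)) = φ (x ⊗ₜ[k] u1 φ y))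
    (hco : Cocomm Wh.toWeakBialgebraStr) (h : H) :
    u1 φ (Wh.toWeakBialgebraStr.piL h) = u1 φ h := by
  set W := Wh.toWeakBialgebraStr with hW
  have h0 : u1 φ (W.piL h)
      = φ (TensorProduct.map LinearMap.id (u1 φ ∘ₗ Wh.lam) (W.delta h)) := by
    rw [← Wh.antipode_r]
    simp only [comp_apply]
    rw [hNmap hn]
    congr 1
    rw [← comp_apply (lTensor H (u1 φ)), show lTensor H (u1 φ) = TensorProduct.map LinearMap.id (u1 φ) from rfl,
      ← TensorProduct.map_comp, LinearMap.comp_id]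
  rw [h0, ← PM2 hm (u1 φ ∘ₗ Wh.lam) (W.delta h)]
  have hsym : rTensor H W.delta (W.delta h)
      = (TensorProduct.assoc k H H H).symm
          ((lTensor H (TensorProduct.comm k H H).toLinearMap)
            ((TensorProduct.assoc k H H H) (rTensor H W.delta (W.delta h)))) := by
    rw [W.coassoc h]
    rw [LinearEquiv.apply_symm_apply]
    rw [← comp_apply (lTensor H (TensorProduct.comm k H H).toLinearMap) (lTensor H W.delta),
      ← lTensor_comp]
    have hc : (TensorProduct.comm k H H).toLinearMap ∘ₗ W.delta = W.delta :=
      LinearMap.ext hco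
    rw [hc]
  rw [hsym]
  have hN4 : ∀ z : (H ⊗[k] H) ⊗[k] H,
      (LinearMap.mul' k B ∘ₗ TensorProduct.map
          (φ ∘ₗ TensorProduct.map LinearMap.id (u1 φ ∘ₗ Wh.lam)) (u1 φ) ∘ₗ shufE k H)
        ((TensorProduct.assoc k H H H).symm
          ((lTensor H (TensorProduct.comm k H H).toLinearMap)
            ((TensorProduct.assoc k H H H) z)))
      = mm (u1 φ ∘ₗ (W.mu ∘ₗ TensorProduct.map LinearMap.id Wh.lam)) (u1 φ) z := by
    intro z
    induction z using TensorProduct.induction_on with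
    | zero => simp
    | tmul w r =>
        induction w using TensorProduct.induction_on with
        | zero => simp [TensorProduct.zero_tmul]
        | tmul p q => simp [hn p (Wh.lam q)]
        | add w w' hw hw' =>
            simp only [TensorProduct.add_tmul, map_add, hw, hw']
    | add z z' hz hz' => simp only [map_add, hz, hz']
  rw [hN4]
  rw [← comp_apply (mm _ _) (rTensor H W.delta), mm_rT]
  have hfin : (u1 φ ∘ₗ (W.mu ∘ₗ TensorProduct.map LinearMap.id Wh.lam)) ∘ₗ W.delta
      = u1 φ ∘ₗ W.piL := by
    ext a
    simp only [comp_apply]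
    rw [show W.mu (TensorProduct.map LinearMap.id Wh.lam (W.delta a)) = W.piL a from by
      have := Wh.antipode_r
      exact congrFun (congrArg (fun f => f.toFun) this) a]
  rw [hfin, Blem hm hu hn]

lemma u1_central (Wh : WeakHopfStr k H) {φ : H ⊗[k] B →ₗ[k] B}
    (hφ : IsWMA Wh.toWeakBialgebraStr φ) (hco : Cocomm Wh.toWeakBialgebraStr)
    (h : H) (c : B) : u1 φ h * c = c * u1 φ h := by
  obtain ⟨hm, hu, hn⟩ := hφ
  rw [← u1_piL_eq Wh hm hu hn hco h]
  exact piL_central hm hu hn hco h c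

end Aux14H

section Aux14I

variable {k : Type} [CommRing k] {H : Type} [AddCommGroup H] [Module k H]
variable {B : Type} [Ring B] [Algebra k B]

lemma comm_ttt {X Y : Type} [AddCommGroup X] [Module k X] [AddCommGroup Y] [Module k Y]
    (s : X ⊗[k] X) (t : Y ⊗[k] Y) :
    TensorProduct.comm k (X ⊗[k] Y) (X ⊗[k] Y) (tensorTensorTensorComm k X X Y Y (s ⊗ₜ[k] t))
      = tensorTensorTensorComm k X X Y Y
          (TensorProduct.comm k X X s ⊗ₜ[k] TensorProduct.comm k Y Y t) := by
  induction s using TensorProduct.induction_on with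
  | zero => simp [TensorProduct.zero_tmul]
  | tmul a a' =>
      induction t using TensorProduct.induction_on with
      | zero => simp [TensorProduct.tmul_zero]
      | tmul c c' => simp
      | add w w' hw hw' => simp only [TensorProduct.tmul_add, map_add, hw, hw']
  | add s s' hs hs' => simp only [TensorProduct.add_tmul, map_add, hs, hs']

variable {W : WeakBialgebraStr k H}

lemma deltaT_tmul {X Y : Type} [AddCommGroup X] [Module k X] [AddCommGroup Y] [Module k Y]
    (dX : X →ₗ[k] X ⊗[k] X) (dY : Y →ₗ[k] Y ⊗[k] Y) (x : X) (y : Y) :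
    deltaT dX dY (x ⊗ₜ[k] y) = tensorTensorTensorComm k X X Y Y (dX x ⊗ₜ[k] dY y) := by
  simp [deltaT]

lemma cocommPow (hco : Cocomm W) : ∀ (n : ℕ) (x : (HpowM k H n).carrier),
    TensorProduct.comm k _ _ (deltaPow W n x) = deltaPow W n x := by
  intro n
  induction n with
  | zero => exact hco
  | succ n ih =>
      intro x
      show TensorProduct.comm k _ _ (deltaT W.delta (deltaPow W n) x)
        = deltaT W.delta (deltaPow W n) x
      induction x using TensorProduct.induction_on with
      | zero => simp
      | tmul h y =>
          rw [deltaT_tmul, comm_ttt, hco h, ih y]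
      | add x x' hx hx' => simp only [map_add, hx, hx']

end Aux14I

theorem HpowM_succ_ind {k : Type} [CommRing k] {H : Type} [AddCommGroup H] [Module k H]
    {n : ℕ} {motive : (HpowM k H (n+1)).carrier → Prop} (x : (HpowM k H (n+1)).carrier)
    (zero : motive 0)
    (tmul : ∀ (h : H) (y : (HpowM k H n).carrier), motive (h ⊗ₜ[k] y))
    (add : ∀ x x' : (HpowM k H (n+1)).carrier, motive x → motive x' → motive (x + x')) :
    motive x :=
  TensorProduct.induction_on (M := H) (N := (HpowM k H n).carrier) x zero tmul add

section Aux14J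

variable {k : Type} [CommRing k] {H : Type} [AddCommGroup H] [Module k H]

lemma rT_ttt {Y : Type} [AddCommGroup Y] [Module k Y]
    (dH : H →ₗ[k] H ⊗[k] H) (dY : Y →ₗ[k] Y ⊗[k] Y)
    (s : H ⊗[k] H) (t : Y ⊗[k] Y) :
    rTensor (H ⊗[k] Y) (deltaT dH dY) (tensorTensorTensorComm k H H Y Y (s ⊗ₜ[k] t))
      = rTensor (H ⊗[k] Y) (tensorTensorTensorComm k H H Y Y).toLinearMap
          (tensorTensorTensorComm k (H ⊗[k] H) H (Y ⊗[k] Y) Y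
            ((rTensor H dH s) ⊗ₜ[k] (rTensor Y dY t))) := by
  induction s using TensorProduct.induction_on with
  | zero => simp [TensorProduct.zero_tmul]
  | tmul a a' =>
      induction t using TensorProduct.induction_on with
      | zero => simp [TensorProduct.tmul_zero]
      | tmul c c' => simp [deltaT_tmul]
      | add w w' hw hw' => simp only [TensorProduct.tmul_add, map_add, hw, hw']
  | add s s' hs hs' => simp only [TensorProduct.add_tmul, map_add, hs, hs']

lemma lT_ttt {Y : Type} [AddCommGroup Y] [Module k Y]
    (dH : H →ₗ[k] H ⊗[k] H) (dY : Y →ₗ[k] Y ⊗[k] Y)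
    (s : H ⊗[k] H) (t : Y ⊗[k] Y) :
    lTensor (H ⊗[k] Y) (deltaT dH dY) (tensorTensorTensorComm k H H Y Y (s ⊗ₜ[k] t))
      = lTensor (H ⊗[k] Y) (tensorTensorTensorComm k H H Y Y).toLinearMap
          (tensorTensorTensorComm k H (H ⊗[k] H) Y (Y ⊗[k] Y)
            ((lTensor H dH s) ⊗ₜ[k] (lTensor Y dY t))) := by
  induction s using TensorProduct.induction_on with
  | zero => simp [TensorProduct.zero_tmul]
  | tmul a a' =>
      induction t using TensorProduct.induction_on with
      | zero => simp [TensorProduct.tmul_zero]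
      | tmul c c' => simp [deltaT_tmul]
      | add w w' hw hw' => simp only [TensorProduct.tmul_add, map_add, hw, hw']
  | add s s' hs hs' => simp only [TensorProduct.add_tmul, map_add, hs, hs']

lemma shuffle_assoc {Y : Type} [AddCommGroup Y] [Module k Y]
    (s2 : H ⊗[k] (H ⊗[k] H)) (t2 : Y ⊗[k] (Y ⊗[k] Y)) :
    rTensor (H ⊗[k] Y) (tensorTensorTensorComm k H H Y Y).toLinearMap
        (tensorTensorTensorComm k (H ⊗[k] H) H (Y ⊗[k] Y) Y
          (((TensorProduct.assoc k H H H).symm s2) ⊗ₜ[k] ((TensorProduct.assoc k Y Y Y).symm t2)))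
      = (TensorProduct.assoc k (H ⊗[k] Y) (H ⊗[k] Y) (H ⊗[k] Y)).symm
          (lTensor (H ⊗[k] Y) (tensorTensorTensorComm k H H Y Y).toLinearMap
            (tensorTensorTensorComm k H (H ⊗[k] H) Y (Y ⊗[k] Y) (s2 ⊗ₜ[k] t2))) := by
  induction s2 using TensorProduct.induction_on with
  | zero => simp [TensorProduct.zero_tmul]
  | tmul a z =>
      induction z using TensorProduct.induction_on with
      | zero => simp [TensorProduct.tmul_zero, TensorProduct.zero_tmul]
      | tmul p q =>
          induction t2 using TensorProduct.induction_on with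
          | zero => simp [TensorProduct.tmul_zero]
          | tmul c w =>
              induction w using TensorProduct.induction_on with
              | zero => simp [TensorProduct.tmul_zero, TensorProduct.zero_tmul]
              | tmul r v => simp
              | add w w' hw hw' =>
                  simp only [TensorProduct.tmul_add, map_add, hw, hw']
          | add t t' ht ht' => simp only [TensorProduct.tmul_add, map_add, ht, ht']
      | add z z' hz hz' =>
          simp only [TensorProduct.tmul_add, TensorProduct.add_tmul, map_add, hz, hz']
  | add s s' hs hs' => simp only [TensorProduct.add_tmul, map_add, hs, hs']

variable {W : WeakBialgebraStr k H}

lemma coassocPow : ∀ (n : ℕ) (x : (HpowM k H n).carrier),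
    rTensor _ (deltaPow W n) (deltaPow W n x)
      = (TensorProduct.assoc k _ _ _).symm (lTensor _ (deltaPow W n) (deltaPow W n x)) := by
  intro n
  induction n with
  | zero => exact W.coassoc
  | succ n ih =>
      intro x
      show rTensor _ (deltaT W.delta (deltaPow W n)) (deltaT W.delta (deltaPow W n) x) = _
      induction x using HpowM_succ_ind with
      | zero =>
          show rTensor _ (deltaT W.delta (deltaPow W n))
            (deltaT W.delta (deltaPow W n) (0 : H ⊗[k] (HpowM k H n).carrier)) = _
          simp <;> rfl
      | tmul h y =>
          rw [deltaT_tmul, rT_ttt, W.coassoc h, ih y, shuffle_assoc, ← lT_ttt, ← deltaT_tmul]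
          rfl
      | add x x' hx hx' =>
          exact ((congrArg (rTensor _ (deltaT W.delta (deltaPow W n)))
            (map_add (deltaT W.delta (deltaPow W n)) x x')).trans (map_add _ _ _)).trans
            ((congrArg₂ (· + ·) hx hx').trans
              (map_add ((TensorProduct.assoc k _ _ _).symm.toLinearMap
                ∘ₗ lTensor _ (deltaPow W (n+1)) ∘ₗ deltaPow W (n+1)) x x').symm)

end Aux14J

section Aux14K

variable {k : Type} [CommRing k] {H : Type} [AddCommGroup H] [Module k H]
variable {B : Type} [Ring B] [Algebra k B]
variable {W : WeakBialgebraStr k H} {φ : H ⊗[k] B →ₗ[k] B}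

lemma phiPow_succ_tmul (n : ℕ) (h : H) (y : (HpowM k H n).carrier) (b : B) :
    phiPow φ (n+1) ((h ⊗ₜ[k] y) ⊗ₜ[k] b) = φ (h ⊗ₜ[k] phiPow φ n (y ⊗ₜ[k] b)) := by
  show φ ((lTensor H (phiPow φ n)) ((TensorProduct.assoc k H (HpowM k H n).carrier B) ((h ⊗ₜ[k] y) ⊗ₜ[k] b))) = _
  rw [assoc_tmul, lTensor_tmul]

lemma uPow_succ_tmul (n : ℕ) (h : H) (y : (HpowM k H n).carrier) :
    uPow W φ (n+1) (h ⊗ₜ[k] y) = u1 φ (W.mu (h ⊗ₜ[k] mPow W n y)) := by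
  show u1 φ (W.mu ((lTensor H (mPow W n)) (h ⊗ₜ[k] y))) = _
  rw [lTensor_tmul]

lemma measPow (hm : IsMeasuring W φ) : ∀ (n : ℕ) (x : (HpowM k H n).carrier) (b c : B),
    phiPow φ n (x ⊗ₜ[k] (b * c))
      = mm (app2 (phiPow φ n) b) (app2 (phiPow φ n) c) (deltaPow W n x) := by
  intro n
  induction n with
  | zero => exact fun x b c => meas_mm hm x b c
  | succ n ih =>
      intro x b c
      induction x using HpowM_succ_ind with
      | zero => simp
      | tmul h y =>
          rw [phiPow_succ_tmul, ih y b c,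
            show mm (app2 (phiPow φ n) b) (app2 (phiPow φ n) c) (deltaPow W n y)
              = LinearMap.mul' k B (TensorProduct.map (app2 (phiPow φ n) b)
                  (app2 (phiPow φ n) c) (deltaPow W n y)) from rfl,
            phi_mul hm]
          show _ = mm _ _ (deltaT W.delta (deltaPow W n) (h ⊗ₜ[k] y))
          rw [deltaT_tmul]
          generalize W.delta h = s
          generalize deltaPow W n y = t
          induction s using TensorProduct.induction_on with
          | zero => simp [TensorProduct.zero_tmul]
          | tmul a a' =>
              induction t using TensorProduct.induction_on with
              | zero => simp [TensorProduct.tmul_zero]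
              | tmul p q =>
                  simp only [tensorTensorTensorComm_tmul, map_tmul, mul'_apply,
                    mm_tmul, app2_apply]
                  rw [← phiPow_succ_tmul n a p b, ← phiPow_succ_tmul n a' q c]
                  rfl
              | add w w' hw hw' =>
                  simp only [TensorProduct.tmul_add, map_add, hw, hw', mul_add]
          | add s s' hs hs' =>
              simp only [TensorProduct.add_tmul, map_add, hs, hs', add_mul]
      | add x x' hx hx' =>
          simp only [TensorProduct.add_tmul, map_add, hx, hx']

lemma phiPow_one (hn : ∀ x y : H, u1 φ (W.mu (x ⊗ₜ[k] y)) = φ (x ⊗ₜ[k] u1 φ y)) :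
    ∀ (n : ℕ) (x : (HpowM k H n).carrier),
    phiPow φ n (x ⊗ₜ[k] (1 : B)) = uPow W φ n x := by
  intro n
  induction n with
  | zero => intro x; rfl
  | succ n ih =>
      intro x
      induction x using HpowM_succ_ind with
      | zero => simp
      | tmul h y =>
          rw [phiPow_succ_tmul, ih y, uPow_succ_tmul, hn,
            show uPow W φ n y = u1 φ (mPow W n y) from rfl]
      | add x x' hx hx' => simp only [TensorProduct.add_tmul, map_add, hx, hx']

end Aux14K

section Aux14L

variable {k : Type} [CommRing k] {H : Type} [AddCommGroup H] [Module k H]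
variable {B : Type} [Ring B] [Algebra k B]

@[simp] lemma wbar_tmul {X : Type} [AddCommGroup X] [Module k X] (f : X →ₗ[k] B) (x : X) (b : B) :
    wbar f (x ⊗ₜ[k] b) = f x * b := by simp [wbar]

@[simp] lemma wbarOp_tmul {X : Type} [AddCommGroup X] [Module k X] (f : X →ₗ[k] B) (x : X) (b : B) :
    wbarOp f (x ⊗ₜ[k] b) = b * f x := by simp [wbarOp]

lemma wedge_apply {X : Type} [AddCommGroup X] [Module k X] (D : X →ₗ[k] X ⊗[k] X)
    (f g : X ⊗[k] B →ₗ[k] B) (x : X) (b : B) :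
    wedgeOn D f g (x ⊗ₜ[k] b)
      = f (lTensor X g ((TensorProduct.assoc k X X B) (D x ⊗ₜ[k] b))) := by
  simp [wedgeOn]

lemma wbar_form {X : Type} [AddCommGroup X] [Module k X] (u' : X →ₗ[k] B)
    (g : X ⊗[k] B →ₗ[k] B) (t : X ⊗[k] X) (b : B) :
    wbar u' (lTensor X g ((TensorProduct.assoc k X X B) (t ⊗ₜ[k] b)))
      = mm u' (app2 g b) t := by
  induction t using TensorProduct.induction_on with
  | zero => simp [TensorProduct.zero_tmul]
  | tmul p q => simp
  | add s s' hs hs' => simp only [TensorProduct.add_tmul, map_add, hs, hs']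

lemma wbarOp_form {X : Type} [AddCommGroup X] [Module k X] (u' : X →ₗ[k] B)
    (g : X ⊗[k] B →ₗ[k] B) (t : X ⊗[k] X) (b : B) :
    wbarOp u' (lTensor X g ((TensorProduct.assoc k X X B) (t ⊗ₜ[k] b)))
      = mm (app2 g b) u' (TensorProduct.comm k X X t) := by
  induction t using TensorProduct.induction_on with
  | zero => simp [TensorProduct.zero_tmul]
  | tmul p q => simp
  | add s s' hs hs' => simp only [TensorProduct.add_tmul, map_add, hs, hs']

variable {W : WeakBialgebraStr k H} {φ : H ⊗[k] B →ₗ[k] B}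

lemma uPow_app2 (hn : ∀ x y : H, u1 φ (W.mu (x ⊗ₜ[k] y)) = φ (x ⊗ₜ[k] u1 φ y)) (n : ℕ) :
    uPow W φ n = app2 (phiPow φ n) (1 : B) :=
  LinearMap.ext fun x' => (phiPow_one hn n x').symm

lemma K1 (hm : IsMeasuring W φ)
    (hn : ∀ x y : H, u1 φ (W.mu (x ⊗ₜ[k] y)) = φ (x ⊗ₜ[k] u1 φ y)) (n : ℕ) :
    wedgeOn (deltaPow W n) (wbar (uPow W φ n)) (phiPow φ n) = phiPow φ n := by
  apply TensorProduct.ext'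
  intro x b
  rw [wedge_apply, wbar_form, uPow_app2 hn n, ← measPow hm, one_mul]

lemma K2 (hm : IsMeasuring W φ)
    (hn : ∀ x y : H, u1 φ (W.mu (x ⊗ₜ[k] y)) = φ (x ⊗ₜ[k] u1 φ y)) (hco : Cocomm W) (n : ℕ) :
    wedgeOn (deltaPow W n) (wbarOp (uPow W φ n)) (phiPow φ n) = phiPow φ n := by
  apply TensorProduct.ext'
  intro x b
  rw [wedge_apply, wbarOp_form, cocommPow hco n x, uPow_app2 hn n, ← measPow hm, mul_one]

lemma K4 {X : Type} [AddCommGroup X] [Module k X] (D : X →ₗ[k] X ⊗[k] X)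
    (f g : X →ₗ[k] B) :
    wedgeOn D (wbar f) (wbar g) = wbar (convOn D f g) := by
  apply TensorProduct.ext'
  intro x b
  rw [wedge_apply]
  have h1 : ∀ t : X ⊗[k] X,
      wbar f (lTensor X (wbar g) ((TensorProduct.assoc k X X B) (t ⊗ₜ[k] b)))
        = LinearMap.mul' k B (TensorProduct.map f g t) * b := by
    intro t
    induction t using TensorProduct.induction_on with
    | zero => simp [TensorProduct.zero_tmul]
    | tmul p q => simp [mul_assoc]
    | add s s' hs hs' => simp only [TensorProduct.add_tmul, map_add, hs, hs', add_mul]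
  rw [h1]
  simp [convOn]

lemma K4op (hco : Cocomm W) (n : ℕ)
    (f g : (HpowM k H n).carrier →ₗ[k] B) :
    wedgeOn (deltaPow W n) (wbarOp f) (wbarOp g) = wbarOp (convOn (deltaPow W n) g f) := by
  apply TensorProduct.ext'
  intro x b
  rw [wedge_apply]
  have h1 : ∀ t,
      wbarOp f (lTensor _ (wbarOp g) ((TensorProduct.assoc k _ _ B) (t ⊗ₜ[k] b)))
        = b * LinearMap.mul' k B (TensorProduct.map g f (TensorProduct.comm k _ _ t)) := by
    intro t
    induction t using TensorProduct.induction_on with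
    | zero => simp [TensorProduct.zero_tmul]
    | tmul p q => simp [mul_assoc]
    | add s s' hs hs' => simp only [TensorProduct.add_tmul, map_add, hs, hs', mul_add]
  rw [h1, cocommPow hco n x]
  simp [convOn]

lemma K5 (hco : Cocomm W) (n : ℕ) (f g : (HpowM k H n).carrier →ₗ[k] B) :
    wedgeOn (deltaPow W n) (wbar f) (wbarOp g)
      = wedgeOn (deltaPow W n) (wbarOp g) (wbar f) := by
  apply TensorProduct.ext'
  intro x b
  rw [wedge_apply, wedge_apply]
  have h1 : ∀ t,
      wbar f (lTensor _ (wbarOp g) ((TensorProduct.assoc k _ _ B) (t ⊗ₜ[k] b)))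
        = wbarOp g (lTensor _ (wbar f)
            ((TensorProduct.assoc k _ _ B) ((TensorProduct.comm k _ _ t) ⊗ₜ[k] b))) := by
    intro t
    induction t using TensorProduct.induction_on with
    | zero => simp [TensorProduct.zero_tmul]
    | tmul p q => simp [mul_assoc]
    | add s s' hs hs' => simp only [TensorProduct.add_tmul, map_add, hs, hs']
  rw [h1, cocommPow hco n x]

end Aux14L

section Aux14M

variable {k : Type} [CommRing k] {H : Type} [AddCommGroup H] [Module k H]
variable {B : Type} [Ring B] [Algebra k B]

lemma conv_apply {X : Type} [AddCommGroup X] [Module k X] (D : X →ₗ[k] X ⊗[k] X)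
    (f g : X →ₗ[k] B) (x : X) :
    convOn D f g x = LinearMap.mul' k B (TensorProduct.map f g (D x)) := by
  simp [convOn]

lemma wedge_assoc {X : Type} [AddCommGroup X] [Module k X] (D : X →ₗ[k] X ⊗[k] X)
    (hD : ∀ x, rTensor X D (D x) = (TensorProduct.assoc k X X X).symm (lTensor X D (D x)))
    (f g p : X ⊗[k] B →ₗ[k] B) :
    wedgeOn D (wedgeOn D f g) p = wedgeOn D f (wedgeOn D g p) := by
  apply TensorProduct.ext'
  intro x b
  rw [wedge_apply, wedge_apply]
  have hr : ∀ t : X ⊗[k] X,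
      f (lTensor X (wedgeOn D g p) ((TensorProduct.assoc k X X B) (t ⊗ₜ[k] b)))
        = (f ∘ₗ lTensor X (g ∘ₗ lTensor X p ∘ₗ (TensorProduct.assoc k X X B).toLinearMap)
            ∘ₗ (TensorProduct.assoc k X (X ⊗[k] X) B).toLinearMap)
          ((lTensor X D t) ⊗ₜ[k] b) := by
    intro t
    induction t using TensorProduct.induction_on with
    | zero => simp [TensorProduct.zero_tmul]
    | tmul y r => simp [wedge_apply]
    | add s s' hs hs' => simp only [TensorProduct.add_tmul, map_add, hs, hs']
  have hl : ∀ t : X ⊗[k] X,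
      (wedgeOn D f g) (lTensor X p ((TensorProduct.assoc k X X B) (t ⊗ₜ[k] b)))
        = (f ∘ₗ lTensor X g ∘ₗ (TensorProduct.assoc k X X B).toLinearMap
            ∘ₗ lTensor (X ⊗[k] X) p ∘ₗ (TensorProduct.assoc k (X ⊗[k] X) X B).toLinearMap)
          ((rTensor X D t) ⊗ₜ[k] b) := by
    intro t
    induction t using TensorProduct.induction_on with
    | zero => simp [TensorProduct.zero_tmul]
    | tmul y s => simp [wedge_apply]
    | add s s' hs hs' => simp only [TensorProduct.add_tmul, map_add, hs, hs']
  have hmid : ∀ z : X ⊗[k] (X ⊗[k] X),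
      (f ∘ₗ lTensor X g ∘ₗ (TensorProduct.assoc k X X B).toLinearMap
          ∘ₗ lTensor (X ⊗[k] X) p ∘ₗ (TensorProduct.assoc k (X ⊗[k] X) X B).toLinearMap)
        (((TensorProduct.assoc k X X X).symm z) ⊗ₜ[k] b)
      = (f ∘ₗ lTensor X (g ∘ₗ lTensor X p ∘ₗ (TensorProduct.assoc k X X B).toLinearMap)
          ∘ₗ (TensorProduct.assoc k X (X ⊗[k] X) B).toLinearMap) (z ⊗ₜ[k] b) := by
    intro z
    induction z using TensorProduct.induction_on with
    | zero => simp [TensorProduct.zero_tmul]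
    | tmul y w =>
        induction w using TensorProduct.induction_on with
        | zero => simp [TensorProduct.tmul_zero, TensorProduct.zero_tmul]
        | tmul r s => simp
        | add w w' hw hw' =>
            simp only [TensorProduct.tmul_add, TensorProduct.add_tmul, map_add, hw, hw']
    | add z z' hz hz' => simp only [TensorProduct.add_tmul, map_add, hz, hz']
  rw [hl, hr, hD x, hmid]

lemma conv_assoc {X : Type} [AddCommGroup X] [Module k X] (D : X →ₗ[k] X ⊗[k] X)
    (hD : ∀ x, rTensor X D (D x) = (TensorProduct.assoc k X X X).symm (lTensor X D (D x)))
    (f g p : X →ₗ[k] B) :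
    convOn D (convOn D f g) p = convOn D f (convOn D g p) := by
  apply LinearMap.ext
  intro x
  rw [conv_apply, conv_apply]
  have h1 : ∀ t : X ⊗[k] X,
      LinearMap.mul' k B (TensorProduct.map (convOn D f g) p t)
        = (LinearMap.mul' k B ∘ₗ TensorProduct.map (LinearMap.mul' k B ∘ₗ TensorProduct.map f g) p)
            (rTensor X D t) := by
    intro t
    induction t using TensorProduct.induction_on with
    | zero => simp
    | tmul y r => simp [conv_apply]
    | add s s' hs hs' => simp only [map_add, hs, hs']
  have h2 : ∀ t : X ⊗[k] X,
      LinearMap.mul' k B (TensorProduct.map f (convOn D g p) t)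
        = (LinearMap.mul' k B ∘ₗ TensorProduct.map f (LinearMap.mul' k B ∘ₗ TensorProduct.map g p))
            (lTensor X D t) := by
    intro t
    induction t using TensorProduct.induction_on with
    | zero => simp
    | tmul y r => simp [conv_apply]
    | add s s' hs hs' => simp only [map_add, hs, hs']
  have h3 : ∀ z : X ⊗[k] (X ⊗[k] X),
      (LinearMap.mul' k B ∘ₗ TensorProduct.map (LinearMap.mul' k B ∘ₗ TensorProduct.map f g) p)
          ((TensorProduct.assoc k X X X).symm z)
        = (LinearMap.mul' k B ∘ₗ TensorProduct.map f (LinearMap.mul' k B ∘ₗ TensorProduct.map g p)) z := by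
    intro z
    induction z using TensorProduct.induction_on with
    | zero => simp
    | tmul y w =>
        induction w using TensorProduct.induction_on with
        | zero => simp [TensorProduct.tmul_zero]
        | tmul r s => simp [mul_assoc]
        | add w w' hw hw' =>
            simp only [TensorProduct.tmul_add, TensorProduct.add_tmul, map_add, hw, hw', mul_add]
    | add z z' hz hz' => simp only [TensorProduct.add_tmul, map_add, hz, hz']
  rw [h1, h2, hD x, h3]

lemma K7 (Wh : WeakHopfStr k H) {φ : H ⊗[k] B →ₗ[k] B}
    (hφ : IsWMA Wh.toWeakBialgebraStr φ) (hco : Cocomm Wh.toWeakBialgebraStr) (n : ℕ) :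
    wbar (uPow Wh.toWeakBialgebraStr φ n) = wbarOp (uPow Wh.toWeakBialgebraStr φ n) := by
  apply TensorProduct.ext'
  intro x b
  rw [wbar_tmul, wbarOp_tmul,
    show uPow Wh.toWeakBialgebraStr φ n x = u1 φ (mPow Wh.toWeakBialgebraStr n x) from rfl]
  exact u1_central Wh hφ hco _ b

end Aux14M

section Aux14N

variable {k : Type} [CommRing k] {H : Type} [AddCommGroup H] [Module k H]
variable {B : Type} [Ring B] [Algebra k B]

/-- Iterated inverse action. -/
def phidPow (φd : H ⊗[k] B →ₗ[k] B) : (n : ℕ) →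
    ((HpowM k H n).carrier ⊗[k] B →ₗ[k] B)
  | 0 => φd
  | n + 1 => phidPow φd n ∘ₗ lTensor (HpowM k H n).carrier φd
      ∘ₗ (TensorProduct.assoc k (HpowM k H n).carrier H B).toLinearMap
      ∘ₗ rTensor B (TensorProduct.comm k H (HpowM k H n).carrier).toLinearMap

lemma phidPow_succ_tmul (φd : H ⊗[k] B →ₗ[k] B) (n : ℕ) (h : H)
    (y : (HpowM k H n).carrier) (b : B) :
    phidPow φd (n+1) ((h ⊗ₜ[k] y) ⊗ₜ[k] b) = phidPow φd n (y ⊗ₜ[k] φd (h ⊗ₜ[k] b)) := by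
  show phidPow φd n ((lTensor (HpowM k H n).carrier φd)
    ((TensorProduct.assoc k (HpowM k H n).carrier H B)
      ((rTensor B (TensorProduct.comm k H (HpowM k H n).carrier).toLinearMap)
        ((h ⊗ₜ[k] y) ⊗ₜ[k] b)))) = _
  rw [rTensor_tmul]
  simp only [LinearEquiv.coe_coe, TensorProduct.comm_tmul, assoc_tmul, lTensor_tmul]

variable {W : WeakBialgebraStr k H} {φ : H ⊗[k] B →ₗ[k] B}

lemma hinvL {φd : H ⊗[k] B →ₗ[k] B}
    (hφd : wedgeOn W.delta φ φd = wbar (u1 φ)) (e : H) (b : B) :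
    φ (lTensor H (app2 φd b) (W.delta e)) = u1 φ e * b := by
  have h := congrArg (fun F : H ⊗[k] B →ₗ[k] B => F (e ⊗ₜ[k] b)) hφd
  simp only [wbar_tmul] at h
  rw [← h, wedge_apply]
  congr 1
  generalize W.delta e = t
  induction t using TensorProduct.induction_on with
  | zero => simp [TensorProduct.zero_tmul]
  | tmul p q => simp
  | add s s' hs hs' => simp only [TensorProduct.add_tmul, map_add, hs, hs']

def castP (n : ℕ) : (H ⊗[k] (HpowM k H n).carrier) ⊗[k] (H ⊗[k] (HpowM k H n).carrier)
    →ₗ[k] (HpowM k H (n+1)).carrier ⊗[k] (HpowM k H (n+1)).carrier := LinearMap.id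

lemma castP_tmul (n : ℕ) (a a' : H) (c c' : (HpowM k H n).carrier) :
    castP n ((a ⊗ₜ[k] c) ⊗ₜ[k] (a' ⊗ₜ[k] c'))
      = TensorProduct.tmul k (M := (HpowM k H (n+1)).carrier) (N := (HpowM k H (n+1)).carrier)
          (a ⊗ₜ[k] c) (a' ⊗ₜ[k] c') := rfl

lemma phid_wedge (hm : IsMeasuring W φ) (hu : ∀ b : B, φ (W.one ⊗ₜ[k] b) = b)
    (hn : ∀ x y : H, u1 φ (W.mu (x ⊗ₜ[k] y)) = φ (x ⊗ₜ[k] u1 φ y))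
    {φd : H ⊗[k] B →ₗ[k] B} (hφd : wedgeOn W.delta φ φd = wbar (u1 φ)) :
    ∀ n : ℕ, wedgeOn (deltaPow W n) (phiPow φ n) (phidPow φd n) = wbar (uPow W φ n) := by
  intro n
  induction n with
  | zero =>
      show wedgeOn W.delta φ φd = wbar (u1 φ ∘ₗ LinearMap.id)
      rw [LinearMap.comp_id]
      exact hφd
  | succ n ih =>
      apply TensorProduct.ext'
      intro x b
      induction x using HpowM_succ_ind with
      | zero => simp
      | tmul h y =>
          show phiPow φ (n+1) (lTensor _ (phidPow φd (n+1))
            ((TensorProduct.assoc k _ _ B) ((castP n (tensorTensorTensorComm k H H _ _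
              (W.delta h ⊗ₜ[k] deltaPow W n y))) ⊗ₜ[k] b))) = _
          -- collapse the inner (level n) part using ih
          have lemA : ∀ (a a' : H) (z : (HpowM k H n).carrier ⊗[k] (HpowM k H n).carrier),
              phiPow φ (n+1) (lTensor _ (phidPow φd (n+1))
                ((TensorProduct.assoc k _ _ B)
                  ((castP n (tensorTensorTensorComm k H H _ _ ((a ⊗ₜ[k] a') ⊗ₜ[k] z))) ⊗ₜ[k] b)))
              = φ (a ⊗ₜ[k] (phiPow φ n (lTensor _ (phidPow φd n)
                  ((TensorProduct.assoc k _ _ B) (z ⊗ₜ[k] (φd (a' ⊗ₜ[k] b))))))) := by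
            intro a a' z
            induction z using TensorProduct.induction_on with
            | zero => simp
            | tmul c c' =>
                simp only [tensorTensorTensorComm_tmul, castP_tmul, LinearEquiv.coe_coe, assoc_tmul,
                  lTensor_tmul]
                exact (phiPow_succ_tmul (φ := φ) n a c (phidPow φd (n+1)
                  (TensorProduct.tmul k (M := (HpowM k H (n+1)).carrier) (a' ⊗ₜ[k] c') b))).trans
                  (congrArg (fun t => φ (a ⊗ₜ[k] phiPow φ n (c ⊗ₜ[k] t)))
                    (phidPow_succ_tmul φd n a' c' b))
            | add z z' hz hz' =>
                simp only [TensorProduct.tmul_add, map_add, hz, hz', TensorProduct.add_tmul]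
          have lemA' : ∀ a a' : H,
              phiPow φ (n+1) (lTensor _ (phidPow φd (n+1))
                ((TensorProduct.assoc k _ _ B)
                  ((castP n (tensorTensorTensorComm k H H _ _ ((a ⊗ₜ[k] a') ⊗ₜ[k] (deltaPow W n y))))
                    ⊗ₜ[k] b)))
              = φ (a ⊗ₜ[k] (uPow W φ n y * φd (a' ⊗ₜ[k] b))) := by
            intro a a'
            rw [lemA]
            congr 1
            rw [show (phiPow φ n (lTensor _ (phidPow φd n)
                ((TensorProduct.assoc k _ _ B) ((deltaPow W n y) ⊗ₜ[k] (φd (a' ⊗ₜ[k] b))))))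
              = wedgeOn (deltaPow W n) (phiPow φ n) (phidPow φd n) (y ⊗ₜ[k] φd (a' ⊗ₜ[k] b)) from
              (wedge_apply _ _ _ _ _).symm, ih, wbar_tmul]
          -- now sum over Δ h
          have lemB : ∀ s : H ⊗[k] H,
              phiPow φ (n+1) (lTensor _ (phidPow φd (n+1))
                ((TensorProduct.assoc k _ _ B)
                  ((castP n (tensorTensorTensorComm k H H _ _ (s ⊗ₜ[k] (deltaPow W n y)))) ⊗ₜ[k] b)))
              = (φ ∘ₗ lTensor H (LinearMap.mulLeft k (uPow W φ n y) ∘ₗ app2 φd b)) s := by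
            intro s
            induction s using TensorProduct.induction_on with
            | zero => simp [TensorProduct.zero_tmul]
            | tmul a a' => rw [lemA' a a']; simp
            | add s s' hs hs' =>
                simp only [TensorProduct.add_tmul, map_add, hs, hs']
          rw [lemB]
          -- step 2 : compute J (Δ h)
          have step2a : ∀ s : H ⊗[k] H,
              (φ ∘ₗ lTensor H (LinearMap.mulLeft k (uPow W φ n y) ∘ₗ app2 φd b)) s
              = (LinearMap.mul' k B ∘ₗ TensorProduct.map (app2 φ (uPow W φ n y))
                  (φ ∘ₗ lTensor H (app2 φd b)))
                ((TensorProduct.assoc k H H H) (rTensor H W.delta s)) := by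
            intro s
            induction s using TensorProduct.induction_on with
            | zero => simp
            | tmul p q =>
                simp only [comp_apply, lTensor_tmul, mulLeft_apply, app2_apply,
                  rTensor_tmul]
                rw [meas_mm hm p (uPow W φ n y) (φd (q ⊗ₜ[k] b))]
                generalize W.delta p = w
                induction w using TensorProduct.induction_on with
                | zero => simp [TensorProduct.zero_tmul]
                | tmul p₁ p₂ => simp
                | add w w' hw hw' =>
                    simp only [TensorProduct.add_tmul, map_add, hw, hw']
            | add s s' hs hs' => simp only [map_add, hs, hs']
          rw [step2a (W.delta h), W.coassoc h, LinearEquiv.apply_symm_apply]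
          simp only [comp_apply]
          rw [← comp_apply (TensorProduct.map _ _) (lTensor H W.delta), ← map_lT]
          have step2d : (φ ∘ₗ lTensor H (app2 φd b)) ∘ₗ W.delta
              = LinearMap.mulRight k b ∘ₗ u1 φ := by
            ext e
            simp only [comp_apply, mulRight_apply]
            exact hinvL hφd e b
          rw [step2d]
          rw [show (LinearMap.mul' k B) ((TensorProduct.map (app2 φ (uPow W φ n y))
              (LinearMap.mulRight k b ∘ₗ u1 φ)) (W.delta h))
            = mm (app2 φ (uPow W φ n y)) (LinearMap.mulRight k b ∘ₗ u1 φ) (W.delta h) from rfl]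
          rw [mm_mulRight]
          rw [show uPow W φ n y = u1 φ (mPow W n y) from rfl]
          rw [app2_u1 hn (mPow W n y), mNx hm hn]
          exact (congrArg (· * b) (uPow_succ_tmul (W := W) (φ := φ) n h y)).symm
      | add x x' hx hx' =>
          simp only [TensorProduct.add_tmul, map_add, hx, hx']

end Aux14N
end WK
open WK in
theorem statement14 {k : Type} [CommRing k] {H : Type} [AddCommGroup H] [Module k H]
    {B : Type} [Ring B] [Algebra k B]
    (W : WeakHopfStr k H) (hco : Cocomm W.toWeakBialgebraStr)
    (φ : H ⊗[k] B →ₗ[k] B) (hφ : IsWMA W.toWeakBialgebraStr φ)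
    (hinv : ∃ φd : H ⊗[k] B →ₗ[k] B,
      wedgeOn W.toWeakBialgebraStr.delta φ φd = wbar (u1 φ))
    (n : ℕ) (ω ωi : (HpowM k H n).carrier →ₗ[k] B)
    (hreg : RegPair (deltaPow W.toWeakBialgebraStr n)
      (uPow W.toWeakBialgebraStr φ n) ω ωi)
    (hω : wedgeOn (deltaPow W.toWeakBialgebraStr n) (wbar ω) (phiPow φ n)
        = wedgeOn (deltaPow W.toWeakBialgebraStr n) (wbarOp ω) (phiPow φ n)) :
    wedgeOn (deltaPow W.toWeakBialgebraStr n) (wbar ωi) (phiPow φ n)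
        = wedgeOn (deltaPow W.toWeakBialgebraStr n) (wbarOp ωi) (phiPow φ n) ∧
    ∀ (x : (HpowM k H n).carrier) (b : B), ωi x * b = b * ωi x := by
  obtain ⟨hm, hu, hn⟩ := hφ
  obtain ⟨φd, hφd⟩ := hinv
  obtain ⟨h1, h2, h3, h4⟩ := hreg
  set Wb := W.toWeakBialgebraStr with hWb
  set D := deltaPow Wb n with hDdef
  set Φ := phiPow φ n with hΦdef
  set u := uPow Wb φ n with hudef
  have hD : ∀ x, rTensor _ D (D x) = (TensorProduct.assoc k _ _ _).symm (lTensor _ D (D x)) :=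
    fun x => coassocPow n x
  have hK1 : wedgeOn D (wbar u) Φ = Φ := K1 hm hn n
  have hK2 : wedgeOn D (wbarOp u) Φ = Φ := K2 hm hn hco n
  have hS7 : wedgeOn D Φ (phidPow φd n) = wbar u := phid_wedge hm hu hn hφd n
  have huωi : convOn D u ωi = ωi := by rw [← h2]; exact h4
  have hωiu : convOn D ωi u = ωi := by
    rw [← h1, ← conv_assoc D hD ωi ω ωi, h2, huωi]
  have goal1 : wedgeOn D (wbarOp ωi) Φ = wedgeOn D (wbar ωi) Φ := by
    calc wedgeOn D (wbarOp ωi) Φ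
        = wedgeOn D (wbarOp ωi) (wedgeOn D (wbar u) Φ) := by rw [hK1]
      _ = wedgeOn D (wbarOp ωi) (wedgeOn D (wedgeOn D (wbar ωi) (wbar ω)) Φ) := by
          rw [K4 D ωi ω, h2]
      _ = wedgeOn D (wbarOp ωi) (wedgeOn D (wbar ωi) (wedgeOn D (wbar ω) Φ)) := by
          rw [wedge_assoc D hD]
      _ = wedgeOn D (wedgeOn D (wbarOp ωi) (wbar ωi)) (wedgeOn D (wbar ω) Φ) := by
          rw [wedge_assoc D hD]
      _ = wedgeOn D (wedgeOn D (wbar ωi) (wbarOp ωi)) (wedgeOn D (wbar ω) Φ) := by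
          rw [K5 hco n ωi ωi]
      _ = wedgeOn D (wbar ωi) (wedgeOn D (wbarOp ωi) (wedgeOn D (wbar ω) Φ)) := by
          rw [wedge_assoc D hD]
      _ = wedgeOn D (wbar ωi) (wedgeOn D (wbarOp ωi) (wedgeOn D (wbarOp ω) Φ)) := by rw [hω]
      _ = wedgeOn D (wbar ωi) (wedgeOn D (wedgeOn D (wbarOp ωi) (wbarOp ω)) Φ) := by
          rw [wedge_assoc D hD]
      _ = wedgeOn D (wbar ωi) (wedgeOn D (wbarOp (convOn D ω ωi)) Φ) := by
          rw [K4op hco n ωi ω]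
      _ = wedgeOn D (wbar ωi) (wedgeOn D (wbarOp u) Φ) := by rw [h1]
      _ = wedgeOn D (wbar ωi) Φ := by rw [hK2]
  have goal2 : wbar ωi = wbarOp ωi := by
    calc wbar ωi = wbar (convOn D ωi u) := by rw [hωiu]
      _ = wedgeOn D (wbar ωi) (wbar u) := (K4 D ωi u).symm
      _ = wedgeOn D (wbar ωi) (wedgeOn D Φ (phidPow φd n)) := by rw [hS7]
      _ = wedgeOn D (wedgeOn D (wbar ωi) Φ) (phidPow φd n) := (wedge_assoc D hD _ _ _).symm
      _ = wedgeOn D (wedgeOn D (wbarOp ωi) Φ) (phidPow φd n) := by rw [← goal1]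
      _ = wedgeOn D (wbarOp ωi) (wedgeOn D Φ (phidPow φd n)) := wedge_assoc D hD _ _ _
      _ = wedgeOn D (wbarOp ωi) (wbar u) := by rw [hS7]
      _ = wedgeOn D (wbarOp ωi) (wbarOp u) := by rw [K7 W ⟨hm, hu, hn⟩ hco n]
      _ = wbarOp (convOn D u ωi) := K4op hco n ωi u
      _ = wbarOp ωi := by rw [huωi]
  refine ⟨goal1.symm, fun x b => ?_⟩
  have h5 := congrArg (fun F : (HpowM k H n).carrier ⊗[k] B →ₗ[k] B => F (x ⊗ₜ[k] b)) goal2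
  simpa using h5
end
end
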